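/- arXiv:1511.00166 — 4 statements merged into one kernel-verified Lean document; each statement's English description precedes it below -/
import Mathlib

section
/- Let f be 2π-periodic and analytic with |f(t)| ≤ M in the open strip of half-width α > 0 around the real axis in the complex t-plane. Then the degree-n trigonometric projection f_n of f satisfies ‖f − f_n‖_∞ ≤ 2M e^{-αn} / (e^α − 1) for every n ≥ 0. -/
open Real

/-- The `k`-th Fourier coefficient `c_k = (1/2π) ∫_0^{2π} f(t) e^{-ikt} dt`
of a `2π`-periodic function `f`. -/
noncomputable def fourierCoefficient (f : ℝ → ℂ) (k : ℤ) : ℂ :=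
  (1 / (2 * (π : ℂ))) * ∫ t in (0 : ℝ)..(2 * π), f t * Complex.exp (-Complex.I * k * t)

/-- The degree-`n` trigonometric projection `f_n(t) = Σ_{k=-n}^n c_k e^{ikt}`. -/
noncomputable def trigProjection (f : ℝ → ℂ) (n : ℕ) (t : ℝ) : ℂ :=
  ∑ k ∈ Finset.Icc (-(n : ℤ)) n, fourierCoefficient f k * Complex.exp (Complex.I * k * t)

lemma aux_abs_uIcc {b y : ℝ} (hy : y ∈ Set.uIcc 0 b) : |y| ≤ |b| := by
  rcases le_total 0 b with h | h
  · rw [Set.uIcc_of_le h] at hy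
    rw [abs_of_nonneg hy.1, abs_of_nonneg h]; exact hy.2
  · rw [Set.uIcc_of_ge h] at hy
    rw [abs_of_nonpos hy.2, abs_of_nonpos h]; exact neg_le_neg hy.1

lemma coeff_est (f : ℝ → ℂ) (F : ℂ → ℂ) (α M : ℝ)
    (hext : ∀ t : ℝ, F t = f t)
    (hFper : ∀ z : ℂ, |z.im| < α → F (z + 2 * π) = F z)
    (hana : DifferentiableOn ℂ F {z : ℂ | |z.im| < α})
    (hM : ∀ z : ℂ, |z.im| < α → ‖F z‖ ≤ M) (k : ℤ) (b : ℝ) (hb : |b| < α) :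
    ‖fourierCoefficient f k‖ ≤ M * Real.exp (k * b) := by
  have hπ : (0:ℝ) < π := Real.pi_pos
  set g : ℂ → ℂ := fun z => F z * Complex.exp (-Complex.I * k * z) with hg
  have hgd : DifferentiableOn ℂ g {z : ℂ | |z.im| < α} := by
    apply hana.mul
    exact (Complex.differentiable_exp.comp (differentiable_id.const_mul (-Complex.I * (k:ℂ)))).differentiableOn
  have hwre : ((2 * (π:ℝ) : ℂ) + (b:ℂ) * Complex.I).re = 2 * π := by simp
  have hwim : ((2 * (π:ℝ) : ℂ) + (b:ℂ) * Complex.I).im = b := by simp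
  have hsub : Set.uIcc (0:ℂ).re ((2 * (π:ℝ) : ℂ) + (b:ℂ) * Complex.I).re ×ℂ
      Set.uIcc (0:ℂ).im ((2 * (π:ℝ) : ℂ) + (b:ℂ) * Complex.I).im ⊆ {z : ℂ | |z.im| < α} := by
    intro z hz
    rw [Complex.mem_reProdIm] at hz
    have h2 := hz.2
    rw [Complex.zero_im, hwim] at h2
    exact lt_of_le_of_lt (aux_abs_uIcc h2) hb
  have key := Complex.integral_boundary_rect_eq_zero_of_differentiableOn g 0
    ((2 * (π:ℝ) : ℂ) + (b:ℂ) * Complex.I) (hgd.mono hsub)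
  rw [hwre, hwim] at key
  simp only [Complex.zero_re, Complex.zero_im, Complex.ofReal_zero, zero_mul, add_zero,
    zero_add, smul_eq_mul] at key
  have hvert : (∫ y in (0:ℝ)..b, g ((2 * π : ℝ) + (y:ℂ) * Complex.I)) =
      ∫ y in (0:ℝ)..b, g ((y:ℂ) * Complex.I) := by
    apply intervalIntegral.integral_congr
    intro y hy
    have hy' : |y| < α := lt_of_le_of_lt (aux_abs_uIcc hy) hb
    have h1 : ((2 * π : ℝ) : ℂ) + (y:ℂ) * Complex.I = (y:ℂ) * Complex.I + 2 * π := by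
      push_cast; ring
    rw [hg]
    simp only
    rw [h1]
    congr 1
    · exact hFper _ (by simpa using hy')
    · rw [show -Complex.I * (k:ℂ) * ((y:ℂ) * Complex.I + 2 * (π:ℂ)) =
          -Complex.I * (k:ℂ) * ((y:ℂ) * Complex.I) + ((-k : ℤ) : ℂ) * (2 * (π:ℂ) * Complex.I) by
        push_cast; ring, Complex.exp_add, Complex.exp_int_mul_two_pi_mul_I, mul_one]
  rw [hvert] at key
  have hπ : (0:ℝ) < π := Real.pi_pos
  have hAB : (∫ x in (0:ℝ)..2*π, g x) = ∫ x in (0:ℝ)..2*π, g ((x:ℂ) + b * Complex.I) := by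
    linear_combination key
  have hcoef : fourierCoefficient f k =
      (1 / (2 * (π:ℂ))) * ∫ x in (0:ℝ)..2*π, g ((x:ℂ) + b * Complex.I) := by
    rw [fourierCoefficient, ← hAB]
    congr 1
    apply intervalIntegral.integral_congr
    intro t _
    rw [hg]; simp only [← hext t]
  rw [hcoef, norm_mul]
  have h1 : ‖(1 / (2 * (π:ℂ)))‖ = (2*π)⁻¹ := by
    rw [norm_div, norm_one, norm_mul]
    simp [Complex.norm_real, abs_of_nonneg hπ.le]
  have hbnd : ∀ x ∈ Set.uIoc (0:ℝ) (2*π), ‖g ((x:ℂ) + b * Complex.I)‖ ≤ M * Real.exp (k * b) := by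
    intro x _
    rw [hg]
    simp only
    rw [norm_mul]
    have hzim : (((x:ℂ) + b * Complex.I)).im = b := by simp
    have hF : ‖F ((x:ℂ) + b * Complex.I)‖ ≤ M := by
      exact hM _ (by rw [hzim]; exact hb)
    have hE : ‖Complex.exp (-Complex.I * (k:ℂ) * ((x:ℂ) + b * Complex.I))‖ = Real.exp (k * b) := by
      rw [Complex.norm_exp]
      congr 1
      simp [Complex.mul_re, Complex.mul_im]
    rw [hE]
    exact mul_le_mul_of_nonneg_right hF (Real.exp_nonneg _)
  have hint : ‖∫ x in (0:ℝ)..2*π, g ((x:ℂ) + b * Complex.I)‖ ≤ (M * Real.exp (k*b)) * |2*π - 0| :=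
    intervalIntegral.norm_integral_le_of_norm_le_const hbnd
  rw [h1]
  calc (2*π)⁻¹ * ‖∫ x in (0:ℝ)..2*π, g ((x:ℂ) + b * Complex.I)‖
      ≤ (2*π)⁻¹ * ((M * Real.exp (k*b)) * |2*π - 0|) := by
        apply mul_le_mul_of_nonneg_left hint (by positivity)
    _ = M * Real.exp (k*b) := by
        rw [sub_zero, abs_of_nonneg (by positivity)]
        field_simp

lemma coeff_bound' (f : ℝ → ℂ) (F : ℂ → ℂ) (α M : ℝ) (hα : 0 < α) (k : ℤ)
    (hest : ∀ (b : ℝ), |b| < α → ‖fourierCoefficient f k‖ ≤ M * Real.exp (k * b)) :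
    ‖fourierCoefficient f k‖ ≤ M * Real.exp (-α * |k|) := by
  have hcont : Continuous (fun b : ℝ => M * Real.exp ((k:ℝ) * b)) := by fun_prop
  rcases le_or_gt 0 k with hk | hk
  · have hlim : Filter.Tendsto (fun b : ℝ => M * Real.exp ((k:ℝ) * b)) (nhdsWithin (-α) (Set.Ioi (-α)))
        (nhds (M * Real.exp (-α * |k|))) := by
      have := (hcont.tendsto (-α)).mono_left (nhdsWithin_le_nhds (s := Set.Ioi (-α)))
      convert this using 2
      rw [abs_of_nonneg hk]
      push_cast; ring
    apply ge_of_tendsto hlim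
    filter_upwards [Ioo_mem_nhdsGT (by linarith : -α < α)] with b hb
    exact hest b (abs_lt.2 ⟨hb.1, hb.2⟩)
  · have hlim : Filter.Tendsto (fun b : ℝ => M * Real.exp ((k:ℝ) * b)) (nhdsWithin α (Set.Iio α))
        (nhds (M * Real.exp (-α * |k|))) := by
      have := (hcont.tendsto α).mono_left (nhdsWithin_le_nhds (s := Set.Iio α))
      convert this using 2
      rw [abs_of_neg hk]
      push_cast; ring
    apply ge_of_tendsto hlim
    filter_upwards [Ioo_mem_nhdsLT (by linarith : -α < α)] with b hb
    exact hest b (abs_lt.2 ⟨hb.1, hb.2⟩)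

lemma tail_hasSum (M α : ℝ) (hα : 0 < α) (n : ℕ) :
    HasSum (fun k : ℤ => if k ∈ Finset.Icc (-(n:ℤ)) (n:ℤ) then 0 else M * Real.exp (-α * |k|))
      (2 * M * Real.exp (-α * n) / (Real.exp α - 1)) := by
  have hE1 : (1:ℝ) < Real.exp α := by nlinarith [Real.add_one_le_exp α]
  have hrdef : Real.exp (-α) = (Real.exp α)⁻¹ := Real.exp_neg α
  set E := Real.exp α with hEdef
  set r : ℝ := E⁻¹ with hrE
  have hr0 : 0 < r := by positivity
  have hr1 : r < 1 := by rw [hrE, inv_lt_one_iff₀]; right; exact hE1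
  have hrpow : ∀ j : ℕ, Real.exp (-α * j) = r ^ j := by
    intro j; rw [mul_comm, Real.exp_nat_mul, hrdef]
  set S := M * r ^ (n+1) * (1 - r)⁻¹ with hS
  have geo : HasSum (fun j : ℕ => (M * r^(n+1)) * r^j) S :=
    (hasSum_geometric_of_lt_one hr0.le hr1).mul_left _
  set B : ℤ → ℝ := fun k : ℤ => if k ∈ Finset.Icc (-(n:ℤ)) (n:ℤ) then 0 else M * Real.exp (-α * |k|) with hBdef
  set P : ℕ → ℝ := fun j => if j ≤ n then 0 else M * r^j with hPdef
  have hP1 : (fun j => P (j + (n+1))) = fun j : ℕ => (M * r^(n+1)) * r^j := by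
    funext j
    simp only [hPdef]
    rw [if_neg (by omega), pow_add]
    ring
  have hP : HasSum P S := by
    have h := (hasSum_nat_add_iff (f := P) (n+1)).1 (hP1 ▸ geo)
    have hzero : ∑ j ∈ Finset.range (n+1), P j = 0 :=
      Finset.sum_eq_zero fun i hi => by
        simp only [hPdef]
        rw [Finset.mem_range] at hi
        exact if_pos (by omega)
    rwa [hzero, add_zero] at h
  set Q : ℕ → ℝ := fun j => if j + 1 ≤ n then 0 else M * r^(j+1) with hQdef
  have hQ1 : (fun j => Q (j + n)) = fun j : ℕ => (M * r^(n+1)) * r^j := by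
    funext j
    simp only [hQdef]
    rw [if_neg (by omega), show j + n + 1 = j + (n+1) by omega, pow_add]
    ring
  have hQ : HasSum Q S := by
    have h := (hasSum_nat_add_iff (f := Q) n).1 (hQ1 ▸ geo)
    have hzero : ∑ j ∈ Finset.range n, Q j = 0 :=
      Finset.sum_eq_zero fun i hi => by
        simp only [hQdef]
        rw [Finset.mem_range] at hi
        exact if_pos (by omega)
    rwa [hzero, add_zero] at h
  have h1 : HasSum (fun j : ℕ => B (j : ℤ)) S := by
    convert hP using 1
    funext j
    simp only [hBdef, hPdef, Finset.mem_Icc]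
    have habs : |(j:ℤ)| = (j:ℤ) := abs_of_nonneg (by positivity)
    rw [habs]
    by_cases h : j ≤ n
    · rw [if_pos (by omega), if_pos h]
    · rw [if_neg (by omega), if_neg h]
      push_cast
      rw [hrpow j]
  have h2 : HasSum (fun j : ℕ => B (-((j : ℤ)+1))) S := by
    convert hQ using 1
    funext j
    simp only [hBdef, hQdef, Finset.mem_Icc]
    have habs : |(-((j:ℤ)+1))| = (j:ℤ)+1 := by rw [abs_neg]; exact abs_of_nonneg (by positivity)
    rw [habs]
    by_cases h : j + 1 ≤ n
    · rw [if_pos (by omega), if_pos h]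
    · rw [if_neg (by omega), if_neg h]
      have hc : ((((j:ℤ)+1) : ℤ) : ℝ) = ((j+1:ℕ) : ℝ) := by push_cast; ring
      rw [hc, hrpow (j+1)]
  have htot : HasSum B (S + S) := h1.of_nat_of_neg_add_one h2
  have heq : S + S = 2 * M * Real.exp (-α * n) / (Real.exp α - 1) := by
    rw [hS, hrpow n]
    have h0 : E ≠ 0 := by intro hc; rw [hc] at hE1; linarith
    have hd1 : E - 1 ≠ 0 := by intro hc; linarith
    have hd2 : 1 - r ≠ 0 := by intro hc; linarith
    rw [← hEdef]
    rw [hrE]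
    field_simp
    linear_combination (M * (1 / E) ^ n * 2) * mul_one_div_cancel h0
  rw [heq] at htot
  exact htot


lemma bound_summable (M α : ℝ) (hα : 0 < α) :
    Summable (fun k : ℤ => M * Real.exp (-α * |k|)) := by
  have h0 := (tail_hasSum M α hα 0).summable
  have hfin : Summable (fun k : ℤ =>
      if k ∈ Finset.Icc (-(0:ℕ):ℤ) ((0:ℕ):ℤ) then M * Real.exp (-α * |k|) else 0) := by
    apply summable_of_ne_finset_zero (s := Finset.Icc (-(0:ℕ):ℤ) ((0:ℕ):ℤ))
    intro k hk
    exact if_neg hk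
  have hadd := h0.add hfin
  convert hadd using 1
  funext k
  by_cases h : k = 0 <;> simp [h]

/-- If `f` is `2π`-periodic and extends to a `2π`-periodic holomorphic function `F`,
bounded by `M`, on the open strip of half-width `α > 0` around the real axis, then
its degree-`n` trigonometric projection satisfies
`‖f - f_n‖_∞ ≤ 2M e^{-αn} / (e^α - 1)` for every `n ≥ 0`. -/
theorem trigProjection_error_of_analytic_in_strip
    (f : ℝ → ℂ) (F : ℂ → ℂ) (α M : ℝ) (hα : 0 < α)
    (hper : ∀ t : ℝ, f (t + 2 * π) = f t)
    (hext : ∀ t : ℝ, F t = f t)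
    (hFper : ∀ z : ℂ, |z.im| < α → F (z + 2 * π) = F z)
    (hana : DifferentiableOn ℂ F {z : ℂ | |z.im| < α})
    (hM : ∀ z : ℂ, |z.im| < α → ‖F z‖ ≤ M) :
    ∀ n : ℕ, ∀ t : ℝ,
      ‖f t - trigProjection f n t‖ ≤
        2 * M * Real.exp (-α * n) / (Real.exp α - 1) := by
  intro n t
  haveI : Fact (0 < 2 * π) := ⟨by positivity⟩
  have hπ : (π:ℝ) ≠ 0 := Real.pi_ne_zero
  have hM0 : 0 ≤ M := le_trans (norm_nonneg _) (hM 0 (by simp [hα]))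
  have hperiodic : Function.Periodic f (2 * π) := hper
  have hopen : IsOpen {z : ℂ | |z.im| < α} := by
    have : Continuous fun z : ℂ => |z.im| := (Complex.continuous_im).abs
    exact isOpen_Iio.preimage this
  have hcontF : Continuous fun t : ℝ => F t := by
    rw [continuous_iff_continuousAt]
    intro t
    have hmem : ((t:ℂ)) ∈ {z : ℂ | |z.im| < α} := by simp [hα]
    have hFat : ContinuousAt F (t:ℂ) :=
      (hana.differentiableAt (hopen.mem_nhds hmem)).continuousAt
    exact hFat.comp Complex.continuous_ofReal.continuousAt
  have hcont : Continuous f := by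
    have : (fun t : ℝ => F t) = f := funext hext
    rwa [this] at hcontF
  have hliftcont : Continuous hperiodic.lift := hcont.quotient_liftOn' _
  set G : C(AddCircle (2 * π), ℂ) := ⟨hperiodic.lift, hliftcont⟩ with hGdef
  have hGcoe : ∀ s : ℝ, G (s : AddCircle (2 * π)) = f s := fun s => rfl
  have hcoeff : ∀ k : ℤ, fourierCoeff (⇑G) k = fourierCoefficient f k := by
    intro k
    rw [fourierCoeff_eq_intervalIntegral (⇑G) k 0, fourierCoefficient]
    rw [zero_add]
    have : ∀ x : ℝ, (fourier (-k) (x : AddCircle (2*π))) • G (x : AddCircle (2*π)) =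
        f x * Complex.exp (-Complex.I * k * x) := by
      intro x
      rw [smul_eq_mul, hGcoe, fourier_coe_apply, mul_comm]
      congr 2
      have h2π : ((2*π : ℝ):ℂ) ≠ 0 := by
        simp only [ne_eq, Complex.ofReal_eq_zero]
        positivity
      rw [div_eq_iff h2π]
      push_cast
      ring
    rw [intervalIntegral.integral_congr (fun x _ => this x)]
    rw [Complex.real_smul]
    congr 1
    push_cast
    ring
  have hcb : ∀ k : ℤ, ‖fourierCoefficient f k‖ ≤ M * Real.exp (-α * |k|) :=
    fun k => coeff_bound' f F α M hα k
      (fun b hb => coeff_est f F α M hext hFper hana hM k b hb)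
  have hBsummable := bound_summable M α hα
  have hsummable : Summable (fourierCoeff (⇑G)) := by
    apply Summable.of_norm_bounded hBsummable
    intro k
    rw [hcoeff k]
    exact hcb k
  have hs := has_pointwise_sum_fourier_series_of_summable hsummable (t : AddCircle (2*π))
  set a : ℤ → ℂ := fun k => fourierCoefficient f k * Complex.exp (Complex.I * k * t) with hadef
  have ha : HasSum a (f t) := by
    have hfun : (fun k : ℤ => fourierCoeff (⇑G) k • fourier k (t : AddCircle (2*π))) = a := by
      funext k
      rw [hadef]
      simp only
      rw [hcoeff k, smul_eq_mul]
      congr 1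
      rw [fourier_coe_apply]
      congr 1
      have h2π : ((2*π : ℝ):ℂ) ≠ 0 := by
        simp only [ne_eq, Complex.ofReal_eq_zero]
        positivity
      rw [div_eq_iff h2π]
      push_cast
      ring
    rw [hfun, hGcoe t] at hs
    exact hs
  have hna : ∀ k : ℤ, ‖a k‖ ≤ M * Real.exp (-α * |k|) := by
    intro k
    rw [hadef]
    simp only
    rw [norm_mul]
    have h1 : ‖Complex.exp (Complex.I * k * t)‖ = 1 := by
      rw [Complex.norm_exp]
      simp [Complex.mul_re]
    rw [h1, mul_one]
    exact hcb k
  have hsummable_norm : Summable (fun k : ℤ => ‖a k‖) :=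
    Summable.of_nonneg_of_le (fun k => norm_nonneg _) hna hBsummable
  set s : Finset ℤ := Finset.Icc (-(n:ℤ)) (n:ℤ) with hsdef
  have hproj : trigProjection f n t = ∑ k ∈ s, a k := rfl
  have hcompl : HasSum (fun x : {x : ℤ // x ∉ s} => a x) (f t - ∑ i ∈ s, a i) := by
    apply (Finset.hasSum_compl_iff s).2
    rw [sub_add_cancel]
    exact ha
  set B : ℤ → ℝ := fun k : ℤ => if k ∈ s then 0 else M * Real.exp (-α * |k|) with hBdef
  have htail : HasSum B (2 * M * Real.exp (-α * n) / (Real.exp α - 1)) :=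
    tail_hasSum M α hα n
  have hBcompl : HasSum (fun x : {x : ℤ // x ∉ s} => M * Real.exp (-α * |(x:ℤ)|))
      (2 * M * Real.exp (-α * n) / (Real.exp α - 1)) := by
    have h1 : HasSum (fun x : {x : ℤ // x ∉ s} => B x)
        (2 * M * Real.exp (-α * n) / (Real.exp α - 1)) := by
      apply (Finset.hasSum_compl_iff s).2
      have hz : ∑ i ∈ s, B i = 0 :=
        Finset.sum_eq_zero fun i hi => if_pos hi
      rw [hz, add_zero]
      exact htail
    have heq : (fun x : {x : ℤ // x ∉ s} => B x) =
        fun x : {x : ℤ // x ∉ s} => M * Real.exp (-α * |(x:ℤ)|) := by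
      funext x
      rw [hBdef]
      simp only
      rw [if_neg x.2]
    rwa [heq] at h1
  have hsn : Summable (fun x : {x : ℤ // x ∉ s} => ‖a x‖) :=
    hsummable_norm.subtype {x : ℤ | x ∉ s}
  rw [hproj, ← hcompl.tsum_eq]
  calc ‖∑' (x : {x : ℤ // x ∉ s}), a x‖
      ≤ ∑' (x : {x : ℤ // x ∉ s}), ‖a x‖ := norm_tsum_le_tsum_norm hsn
    _ ≤ ∑' (x : {x : ℤ // x ∉ s}), M * Real.exp (-α * |(x:ℤ)|) :=
        Summable.tsum_le_tsum (fun x => hna x) hsn hBcompl.summable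
    _ = 2 * M * Real.exp (-α * n) / (Real.exp α - 1) := hBcompl.tsum_eq
end

section
/- Let f be 2π-periodic and analytic with |f(t)| ≤ M in the open strip of half-width α > 0 around the real axis. Let I = ∫_0^{2π} f(t) dt and I_N the N-point periodic trapezoidal rule approximation. Then |I_N − I| ≤ 4πM / (e^{αN} − 1) for every N ≥ 1. -/
open Real

lemma strip_open (α : ℝ) : IsOpen {z : ℂ | |z.im| < α} := by
  have : {z : ℂ | |z.im| < α} = (fun z : ℂ => |z.im|) ⁻¹' Set.Iio α := rfl
  rw [this]; exact (Complex.continuous_im.abs).isOpen_preimage _ isOpen_Iio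

lemma shift_integral (F : ℂ → ℂ) (α : ℝ)
    (hFper : ∀ z : ℂ, |z.im| < α → F (z + 2 * π) = F z)
    (hana : DifferentiableOn ℂ F {z : ℂ | |z.im| < α})
    (n : ℤ) (s : ℝ) (hs : |s| < α) :
    (∫ x in (0:ℝ)..(2*π), Complex.exp (-(Complex.I*n*(x + s*Complex.I))) * F (x + s*Complex.I))
      = ∫ x in (0:ℝ)..(2*π), Complex.exp (-(Complex.I*n*x)) * F x := by
  set G : ℂ → ℂ := fun z => Complex.exp (-(Complex.I*n*z)) * F z with hG
  set w : ℂ := (2*π:ℝ) + s*Complex.I with hw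
  have hwre : w.re = 2*π := by simp [hw]
  have hwim : w.im = s := by simp [hw]
  have hsub : (Set.uIcc (0:ℂ).re w.re ×ℂ Set.uIcc (0:ℂ).im w.im) ⊆ {z : ℂ | |z.im| < α} := by
    intro u hu
    have him : u.im ∈ Set.uIcc (0:ℂ).im w.im := hu.2
    rw [Complex.zero_im, hwim] at him
    rw [Set.uIcc] at him
    have h1 : u.im ≤ |s| := him.2.trans (max_le (abs_nonneg s) (le_abs_self s))
    have h2 : -|s| ≤ u.im := le_trans (le_min (by simpa using abs_nonneg s) (neg_abs_le s)) him.1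
    exact lt_of_le_of_lt (abs_le.2 ⟨h2, h1⟩) hs
  have hGd : DifferentiableOn ℂ G (Set.uIcc (0:ℂ).re w.re ×ℂ Set.uIcc (0:ℂ).im w.im) := by
    apply DifferentiableOn.mul
    · exact (Complex.differentiable_exp.comp (by fun_prop)).differentiableOn
    · exact hana.mono hsub
  have key := Complex.integral_boundary_rect_eq_zero_of_differentiableOn G 0 w hGd
  rw [Complex.zero_re, Complex.zero_im, hwre, hwim] at key
  -- vertical sides cancel
  have hvert : (∫ y in (0:ℝ)..s, G (((2*π:ℝ):ℂ) + y * Complex.I)) = ∫ y in (0:ℝ)..s, G (((0:ℝ):ℂ) + y * Complex.I) := by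
    apply intervalIntegral.integral_congr
    intro y hy
    have hyim : |y| < α := by
      rw [Set.uIcc] at hy
      have h1 : y ≤ |s| := hy.2.trans (max_le (abs_nonneg s) (le_abs_self s))
      have h2 : -|s| ≤ y := le_trans (le_min (by simpa using abs_nonneg s) (neg_abs_le s)) hy.1
      exact lt_of_le_of_lt (abs_le.2 ⟨h2, h1⟩) hs
    have him : (((y:ℂ)) * Complex.I).im = y := by simp
    have hF : F (((2*π:ℝ):ℂ) + y * Complex.I) = F (((0:ℝ):ℂ) + y * Complex.I) := by
      have := hFper ((y:ℂ) * Complex.I) (by rw [him]; exact hyim)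
      push_cast
      rw [add_comm ((2:ℂ)*π) _]
      simpa using this
    have hE : Complex.exp (-(Complex.I*n*(((2*π:ℝ):ℂ) + y * Complex.I)))
        = Complex.exp (-(Complex.I*n*(((0:ℝ):ℂ) + y * Complex.I))) := by
      have h1 : -(Complex.I*n*(((2*π:ℝ):ℂ) + y * Complex.I))
          = -(Complex.I*n*(((0:ℝ):ℂ) + y * Complex.I)) + ((-n : ℤ) : ℂ) * (2*π*Complex.I) := by
        push_cast; ring
      rw [h1, Complex.exp_add, Complex.exp_int_mul_two_pi_mul_I]; ring
    simp only [hG]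
    rw [hE, hF]
  have hhor : ∀ x : ℝ, G ((x:ℂ) + (0:ℝ) * Complex.I) = Complex.exp (-(Complex.I*n*x)) * F x := by
    intro x; simp [hG]
  have hhor2 : ∀ x : ℝ, G ((x:ℂ) + (s:ℝ) * Complex.I) = Complex.exp (-(Complex.I*n*(x + s*Complex.I))) * F (x + s*Complex.I) := by
    intro x; simp [hG]
  have e1 : (∫ x in (0:ℝ)..(2*π), G ((x:ℂ) + (0:ℝ)*Complex.I)) = ∫ x in (0:ℝ)..(2*π), Complex.exp (-(Complex.I*n*x)) * F x := by
    exact intervalIntegral.integral_congr fun x _ => hhor x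
  have e2 : (∫ x in (0:ℝ)..(2*π), G ((x:ℂ) + (s:ℝ)*Complex.I)) = ∫ x in (0:ℝ)..(2*π), Complex.exp (-(Complex.I*n*(x + s*Complex.I))) * F (x + s*Complex.I) :=
    intervalIntegral.integral_congr fun x _ => hhor2 x
  rw [hvert] at key
  simp only [smul_eq_mul] at key
  -- key : ∫ G(x+0I) - ∫ G(x+sI) + I*C - I*C = 0
  have : (∫ x in (0:ℝ)..(2*π), G ((x:ℂ) + (0:ℝ)*Complex.I)) = ∫ x in (0:ℝ)..(2*π), G ((x:ℂ) + (s:ℝ)*Complex.I) := by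
    have := key
    push_cast at this ⊢
    linear_combination this
  rw [← e2, ← e1]; exact this.symm

lemma coeff_bound (F : ℂ → ℂ) (α M : ℝ) (hα : 0 < α)
    (hFper : ∀ z : ℂ, |z.im| < α → F (z + 2 * π) = F z)
    (hana : DifferentiableOn ℂ F {z : ℂ | |z.im| < α})
    (hM : ∀ z : ℂ, |z.im| < α → ‖F z‖ ≤ M)
    (β : ℝ) (hβ : β ∈ Set.Ioo 0 α) (n : ℤ) :
    ‖(1/(2*π:ℂ)) * ∫ x in (0:ℝ)..(2*π), Complex.exp (-(Complex.I*n*x)) * F x‖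
      ≤ M * Real.exp (-β * |(n:ℝ)|) := by
  obtain ⟨hβ0, hβα⟩ := hβ
  set s : ℝ := if 0 ≤ n then -β else β with hsdef
  have habs : |s| = β := by
    rcases le_or_gt 0 n with h | h
    · rw [hsdef, if_pos h, abs_neg, _root_.abs_of_pos hβ0]
    · rw [hsdef, if_neg (not_le.2 h), _root_.abs_of_pos hβ0]
  have hs : |s| < α := by rw [habs]; exact hβα
  rw [← shift_integral F α hFper hana n s hs]
  have hns : (n : ℝ) * s = -β * |(n:ℝ)| := by
    rcases le_or_gt 0 n with h | h
    · have : (0:ℝ) ≤ n := by exact_mod_cast h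
      rw [hsdef, if_pos h, _root_.abs_of_nonneg this]; ring
    · have : (n:ℝ) < 0 := by exact_mod_cast h
      rw [hsdef, if_neg (not_le.2 h), _root_.abs_of_neg this]; ring
  have hbound : ∀ x ∈ Set.uIoc (0:ℝ) (2*π),
      ‖Complex.exp (-(Complex.I*n*(x + s*Complex.I))) * F (x + s*Complex.I)‖
        ≤ M * Real.exp (-β * |(n:ℝ)|) := by
    intro x _
    rw [norm_mul, Complex.norm_exp]
    have hre : (-(Complex.I*n*(x + s*Complex.I))).re = (n:ℝ) * s := by
      have : -(Complex.I*(n:ℂ)*((x:ℂ) + (s:ℂ)*Complex.I))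
          = (((n:ℝ)*s : ℝ):ℂ) + ((-(n*x) : ℝ):ℂ)*Complex.I := by push_cast; ring_nf; rw [Complex.I_sq]; ring
      rw [this]; simp
    have hFim : |((x:ℂ) + (s:ℂ)*Complex.I).im| < α := by
      simpa [Complex.add_im] using hs
    have hFle := hM _ hFim
    rw [hre, hns]
    calc Real.exp (-β * |(n:ℝ)|) * ‖F ((x:ℂ) + (s:ℂ)*Complex.I)‖
        ≤ Real.exp (-β * |(n:ℝ)|) * M := by
          exact mul_le_mul_of_nonneg_left hFle (Real.exp_nonneg _)
      _ = M * Real.exp (-β * |(n:ℝ)|) := by ring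
  have hint := intervalIntegral.norm_integral_le_of_norm_le_const hbound
  rw [norm_mul]
  have h2π : (0:ℝ) < 2*π := by positivity
  have habs1 : ‖(1/(2*π:ℂ))‖ = 1/(2*π) := by
    rw [norm_div, norm_one, show (2*(π:ℂ)) = ((2*π:ℝ):ℂ) by push_cast; ring,
      Complex.norm_real, Real.norm_eq_abs, _root_.abs_of_pos h2π]
  rw [habs1]
  rw [sub_zero, _root_.abs_of_pos h2π] at hint
  calc 1/(2*π) * ‖∫ x in (0:ℝ)..(2*π), Complex.exp (-(Complex.I*n*(x + s*Complex.I))) * F (x + s*Complex.I)‖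
      ≤ 1/(2*π) * (M * Real.exp (-β * |(n:ℝ)|) * (2*π)) :=
        mul_le_mul_of_nonneg_left hint (by positivity)
    _ = M * Real.exp (-β * |(n:ℝ)|) := by field_simp

lemma sum_roots (N : ℕ) (hN : 1 ≤ N) (k : ℤ) :
    (∑ j ∈ Finset.range N, Complex.exp (2*π*Complex.I*k*j/N))
      = if (N:ℤ) ∣ k then (N:ℂ) else 0 := by
  have hNC : (N:ℂ) ≠ 0 := Nat.cast_ne_zero.2 (by omega)
  set ω : ℂ := Complex.exp (2*π*Complex.I*k/N) with hωdef
  have hterm : ∀ j : ℕ, Complex.exp (2*π*Complex.I*(k:ℂ)*(j:ℂ)/N) = ω^j := by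
    intro j
    rw [hωdef, ← Complex.exp_nat_mul]
    congr 1; field_simp
  simp_rw [hterm]
  by_cases hdvd : (N:ℤ) ∣ k
  · obtain ⟨m, rfl⟩ := hdvd
    have hω : ω = 1 := by
      have h1 : 2*(π:ℂ)*Complex.I*(((N:ℤ)*m : ℤ):ℂ)/(N:ℂ) = (m:ℂ) * (2*π*Complex.I) := by
        push_cast; field_simp
      rw [hωdef, h1, Complex.exp_int_mul_two_pi_mul_I]
    simp [hω]
  · have hωN : ω^N = 1 := by
      rw [hωdef, ← Complex.exp_nat_mul]
      have h2 : (N:ℂ) * (2*π*Complex.I*k/N) = (k:ℂ) * (2*π*Complex.I) := by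
        field_simp
      rw [h2, Complex.exp_int_mul_two_pi_mul_I]
    have hω1 : ω ≠ 1 := by
      intro h
      rw [hωdef, Complex.exp_eq_one_iff] at h
      obtain ⟨m, hm⟩ := h
      apply hdvd
      field_simp at hm
      have hk : (k:ℂ) = (m:ℂ) * N := by
        linear_combination hm
      exact ⟨m, by rw [mul_comm]; exact_mod_cast hk⟩
    rw [geom_sum_eq hω1, hωN]
    simp [hdvd]

set_option maxHeartbeats 1000000 in
lemma hasSum_aux (K c : ℝ) (hc : 0 < c) :
    HasSum (fun m : ℤ => if m = 0 then (0:ℝ) else K * Real.exp (-c*|(m:ℝ)|))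
      (2*K*Real.exp (-c)/(1-Real.exp (-c))) := by
  set r := Real.exp (-c) with hr
  have hr0 : 0 < r := Real.exp_pos _
  have hr1 : r < 1 := by
    rw [hr, show (1:ℝ) = Real.exp 0 by simp]
    exact Real.exp_lt_exp.2 (by linarith)
  have hrn : ∀ n : ℕ, Real.exp (-c * (n:ℝ)) = r^n := by
    intro n
    rw [hr, ← Real.exp_nat_mul]
    congr 1; ring
  have hgeo : HasSum (fun n : ℕ => K * r^n) (K * (1-r)⁻¹) :=
    (hasSum_geometric_of_lt_one hr0.le hr1).mul_left K
  set b : ℤ → ℝ := fun m => if m = 0 then (0:ℝ) else K * Real.exp (-c*|(m:ℝ)|) with hb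
  have hpos : HasSum (fun n : ℕ => b n)
      (K * (1-r)⁻¹ - K) := by
    have := hgeo.sub (hasSum_ite_eq 0 K)
    convert this using 1
    · rfl
    funext n
    rcases Nat.eq_zero_or_pos n with h | h
    · subst h; simp [hb]
    · have h1 : ((n:ℤ):ℝ) = (n:ℝ) := by push_cast; ring
      have h2 : |((n:ℤ):ℝ)| = (n:ℝ) := by rw [h1, _root_.abs_of_nonneg (Nat.cast_nonneg n)]
      simp only [hb]
      rw [if_neg (by exact_mod_cast h.ne'), if_neg (by omega), h2, hrn]
      ring
  have hneg : HasSum (fun n : ℕ => b (-((n:ℤ)+1)))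
      (K * r * (1-r)⁻¹) := by
    have := (hasSum_geometric_of_lt_one hr0.le hr1).mul_left (K * r)
    convert this using 1
    · rfl
    funext n
    have h0 : (-((n:ℤ)+1)) ≠ 0 := by omega
    simp only [hb]
    rw [if_neg h0]
    have h2 : |(((-((n:ℤ)+1)) : ℤ):ℝ)| = (n:ℝ) + 1 := by
      push_cast; rw [_root_.abs_neg, _root_.abs_of_nonneg (by positivity)]
    rw [h2, show -c * ((n:ℝ)+1) = -c + (-c * n) by ring, Real.exp_add, hrn]
    rw [← hr]; ring
  have htot : HasSum b ((K * (1-r)⁻¹ - K) + K * r * (1-r)⁻¹) :=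
    HasSum.of_nat_of_neg_add_one hpos hneg
  have hden : (1:ℝ) - r ≠ 0 := by linarith
  have hval : K * (1-r)⁻¹ - K + K * r * (1-r)⁻¹ = 2*K*r/(1-r) := by
    field_simp; ring
  have hden : (1:ℝ) - r ≠ 0 := by linarith
  have hval : K * (1-r)⁻¹ - K + K * r * (1-r)⁻¹ = 2*K*r/(1-r) := by
    field_simp; ring
  rw [← hval]
  exact htot

/-- If `f` is `2π`-periodic and extends to a `2π`-periodic holomorphic function `F`,
bounded by `M`, on the open strip of half-width `α > 0` around the real axis, then the
`N`-point periodic trapezoidal rule approximation `I_N = (2π/N) Σ_{j=0}^{N-1} f(2πj/N)`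
to `I = ∫_0^{2π} f(t) dt` satisfies `|I_N - I| ≤ 4πM / (e^{αN} - 1)` for every `N ≥ 1`. -/
theorem trapezoidal_rule_error_of_analytic_in_strip
    (f : ℝ → ℂ) (F : ℂ → ℂ) (α M : ℝ) (hα : 0 < α)
    (hper : ∀ t : ℝ, f (t + 2 * π) = f t)
    (hext : ∀ t : ℝ, F t = f t)
    (hFper : ∀ z : ℂ, |z.im| < α → F (z + 2 * π) = F z)
    (hana : DifferentiableOn ℂ F {z : ℂ | |z.im| < α})
    (hM : ∀ z : ℂ, |z.im| < α → ‖F z‖ ≤ M) :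
    ∀ N : ℕ, 1 ≤ N →
      ‖(2 * π / N) * (∑ j ∈ Finset.range N, f (2 * π * j / N)) -
          ∫ t in (0 : ℝ)..(2 * π), f t‖ ≤ 4 * π * M / (Real.exp (α * N) - 1) := by
  intro N hN
  haveI hfact : Fact ((0:ℝ) < 2*π) := ⟨by positivity⟩
  have hπ : (0:ℝ) < π := pi_pos
  have hNR : (0:ℝ) < N := by exact_mod_cast hN
  have hNC : (N:ℂ) ≠ 0 := Nat.cast_ne_zero.2 (by omega)
  have hM0 : 0 ≤ M := le_trans (norm_nonneg (F 0)) (hM 0 (by simpa using hα))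
  -- continuity of f
  have hfcont : Continuous f := by
    have h1 : Continuous fun t : ℝ => F t := by
      apply continuous_iff_continuousAt.2
      intro t
      exact ((hana.differentiableAt ((strip_open α).mem_nhds (by simp [hα]))).continuousAt).comp
        Complex.continuous_ofReal.continuousAt
    have h2 : (fun t : ℝ => F t) = f := funext hext
    rwa [h2] at h1
  have hper' : Function.Periodic f (2*π) := fun t => hper t
  set g : C(AddCircle (2*π), ℂ) := ⟨hper'.lift, hfcont.quotient_liftOn' _⟩ with hg
  have hgcoe : ∀ x : ℝ, g (x : AddCircle (2*π)) = f x := fun x => hper'.lift_coe x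
  -- Fourier coefficients
  have hcoeff : ∀ n : ℤ, fourierCoeff (⇑g) n
      = (1/(2*π:ℂ)) * ∫ x in (0:ℝ)..(2*π), Complex.exp (-(Complex.I*n*x)) * F x := by
    intro n
    rw [fourierCoeff_eq_intervalIntegral (⇑g) n 0, zero_add, Complex.real_smul]
    push_cast
    congr 1
    apply intervalIntegral.integral_congr
    intro x _
    simp only [smul_eq_mul]
    rw [hgcoe x, ← hext x]
    congr 1
    rw [fourier_coe_apply]
    congr 1
    have hπC : ((π:ℝ):ℂ) ≠ 0 := Complex.ofReal_ne_zero.2 pi_ne_zero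
    push_cast
    field_simp
  have hcb : ∀ β ∈ Set.Ioo 0 α, ∀ n : ℤ,
      ‖fourierCoeff (⇑g) n‖ ≤ M * Real.exp (-β * |(n:ℝ)|) := by
    intro β hβ n
    rw [hcoeff n]
    exact coeff_bound F α M hα hFper hana hM β hβ n
  have hsummable : Summable (fourierCoeff (⇑g)) := by
    have hb2 : Summable (fun m : ℤ => if m = 0 then (0:ℝ) else M * Real.exp (-(α/2)*|(m:ℝ)|)) :=
      (hasSum_aux M (α/2) (by linarith)).summable
    have hb3 : Summable (fun m : ℤ => if m = (0:ℤ) then (M:ℝ) else 0) := (hasSum_ite_eq (0:ℤ) M).summable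
    have hb4 : Summable (fun m : ℤ => M * Real.exp (-(α/2)*|(m:ℝ)|)) := by
      have h := hb2.add hb3
      apply h.congr
      intro m
      by_cases hm : m = 0
      · subst hm; simp
      · simp [hm]
    apply Summable.of_norm
    apply Summable.of_nonneg_of_le (fun n => norm_nonneg _) _ hb4
    intro n
    exact hcb (α/2) ⟨by linarith, by linarith⟩ n
  -- pointwise Fourier expansion at the nodes
  have hpt : ∀ j ∈ Finset.range N, HasSum
      (fun k : ℤ => fourierCoeff (⇑g) k • fourier k ((2*π*j/N : ℝ) : AddCircle (2*π)))
      (f (2*π*j/N)) := by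
    intro j _
    have h := has_pointwise_sum_fourier_series_of_summable hsummable ((2*π*j/N : ℝ) : AddCircle (2*π))
    rwa [hgcoe (2*π*j/N)] at h
  have hsum1 : HasSum (fun k : ℤ => ∑ j ∈ Finset.range N,
      fourierCoeff (⇑g) k • fourier k ((2*π*j/N : ℝ) : AddCircle (2*π)))
      (∑ j ∈ Finset.range N, f (2*π*j/N)) := hasSum_sum hpt
  have hEq : ∀ k : ℤ, (∑ j ∈ Finset.range N,
      fourierCoeff (⇑g) k • fourier k ((2*π*j/N : ℝ) : AddCircle (2*π)))
      = fourierCoeff (⇑g) k * (if (N:ℤ) ∣ k then (N:ℂ) else 0) := by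
    intro k
    rw [← sum_roots N hN k, Finset.mul_sum]
    apply Finset.sum_congr rfl
    intro j _
    rw [smul_eq_mul]
    congr 1
    rw [fourier_coe_apply]
    congr 1
    have hπC : ((π:ℝ):ℂ) ≠ 0 := Complex.ofReal_ne_zero.2 pi_ne_zero
    push_cast
    field_simp
  have hsum2 : HasSum (fun k : ℤ => fourierCoeff (⇑g) k * (if (N:ℤ) ∣ k then (N:ℂ) else 0))
      (∑ j ∈ Finset.range N, f (2*π*j/N)) := by
    simp only [hEq] at hsum1; exact hsum1
  have hNZ : (N:ℤ) ≠ 0 := by exact_mod_cast (by omega : N ≠ 0)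
  have hinj : Function.Injective (fun m : ℤ => m * N) := fun a b h => by
    simpa using mul_right_cancel₀ hNZ h
  have hsupp : ∀ k : ℤ, k ∉ Set.range (fun m : ℤ => m * N) →
      fourierCoeff (⇑g) k * (if (N:ℤ) ∣ k then (N:ℂ) else 0) = 0 := by
    intro k hk
    rw [if_neg, mul_zero]
    intro hdvd
    obtain ⟨t, ht⟩ := hdvd
    exact hk ⟨t, by simp [ht, mul_comm]⟩
  have hsum3 : HasSum (fun m : ℤ => fourierCoeff (⇑g) (m*N) * (if (N:ℤ) ∣ m*N then (N:ℂ) else 0))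
      (∑ j ∈ Finset.range N, f (2*π*j/N)) := (hinj.hasSum_iff hsupp).2 hsum2
  have hsum4 : HasSum (fun m : ℤ => fourierCoeff (⇑g) (m*N) * (N:ℂ))
      (∑ j ∈ Finset.range N, f (2*π*j/N)) := by
    have hEq2 : ∀ m : ℤ, fourierCoeff (⇑g) (m*N) * (if (N:ℤ) ∣ m*N then (N:ℂ) else 0)
        = fourierCoeff (⇑g) (m*N) * (N:ℂ) := by
      intro m; rw [if_pos ⟨m, mul_comm m N⟩]
    simp only [hEq2] at hsum3; exact hsum3
  have hsum5 : HasSum (fun m : ℤ => (2*(π:ℂ)) * fourierCoeff (⇑g) (m*N))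
      ((2 * (π:ℂ) / N) * ∑ j ∈ Finset.range N, f (2*π*j/N)) := by
    have h := hsum4.mul_left ((2*(π:ℂ)/N))
    have hEq3 : ∀ m : ℤ, (2*(π:ℂ)/N) * (fourierCoeff (⇑g) (m*N) * (N:ℂ))
        = (2*(π:ℂ)) * fourierCoeff (⇑g) (m*N) := by
      intro m; field_simp
    simp only [hEq3] at h; exact h
  -- the integral is 2π c₀
  have hI : (∫ t in (0:ℝ)..(2*π), f t) = (2*(π:ℂ)) * fourierCoeff (⇑g) 0 := by
    rw [hcoeff 0]
    have h0 : ∀ x ∈ Set.uIcc (0:ℝ) (2*π),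
        Complex.exp (-(Complex.I*((0:ℤ):ℂ)*x)) * F x = f x := by
      intro x _; simp [hext x]
    rw [intervalIntegral.integral_congr h0]
    have hπC : ((π:ℝ):ℂ) ≠ 0 := Complex.ofReal_ne_zero.2 pi_ne_zero
    field_simp
  -- key has-sum for the error
  have hkey := hsum5.sub (hasSum_ite_eq (0:ℤ) ((2*(π:ℂ)) * fourierCoeff (⇑g) 0))
  -- bound for each fixed β < α
  have main : ∀ β ∈ Set.Ioo 0 α,
      ‖(2 * π / N) * (∑ j ∈ Finset.range N, f (2 * π * j / N)) -
        ∫ t in (0 : ℝ)..(2 * π), f t‖ ≤ 4 * π * M / (Real.exp (β * N) - 1) := by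
    intro β hβ
    have hc : 0 < β * N := mul_pos hβ.1 hNR
    have hb := hasSum_aux (2*π*M) (β*N) hc
    have hterm : ∀ m : ℤ,
        ‖(2*(π:ℂ)) * fourierCoeff (⇑g) (m*N) -
          (if m = 0 then (2*(π:ℂ)) * fourierCoeff (⇑g) 0 else 0)‖
        ≤ (if m = 0 then (0:ℝ) else 2*π*M * Real.exp (-(β*N)*|(m:ℝ)|)) := by
      intro m
      by_cases hm : m = 0
      · subst hm; simp
      · rw [if_neg hm, if_neg hm, sub_zero, norm_mul]
        have h1 : ‖(2*(π:ℂ))‖ = 2*π := by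
          rw [show (2*(π:ℂ)) = ((2*π:ℝ):ℂ) by push_cast; ring, Complex.norm_real,
            Real.norm_eq_abs, _root_.abs_of_pos (by positivity)]
        have h2 := hcb β hβ (m*N)
        have h3 : |((m*N:ℤ):ℝ)| = |(m:ℝ)| * N := by
          push_cast
          rw [abs_mul, _root_.abs_of_pos hNR]
        rw [h1]
        calc 2*π * ‖fourierCoeff (⇑g) (m*N)‖
            ≤ 2*π * (M * Real.exp (-β * |((m*N:ℤ):ℝ)|)) := by
              apply mul_le_mul_of_nonneg_left _ (by positivity)
              exact_mod_cast h2
          _ = 2*π*M * Real.exp (-(β*N)*|(m:ℝ)|) := by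
              rw [h3, show -β * (|(m:ℝ)| * N) = -(β*N)*|(m:ℝ)| by ring]
              ring
    have hsn : Summable (fun m : ℤ =>
        ‖(2*(π:ℂ)) * fourierCoeff (⇑g) (m*N) -
          (if m = 0 then (2*(π:ℂ)) * fourierCoeff (⇑g) 0 else 0)‖) :=
      Summable.of_nonneg_of_le (fun _ => norm_nonneg _) hterm hb.summable
    have h4 : ‖(2 * (π:ℂ) / N) * (∑ j ∈ Finset.range N, f (2*π*j/N)) -
        (2*(π:ℂ)) * fourierCoeff (⇑g) 0‖
        ≤ 2*(2*π*M)*Real.exp (-(β*N))/(1-Real.exp (-(β*N))) := by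
      rw [← hkey.tsum_eq]
      calc ‖∑' m : ℤ, ((2*(π:ℂ)) * fourierCoeff (⇑g) (m*N) -
            (if m = 0 then (2*(π:ℂ)) * fourierCoeff (⇑g) 0 else 0))‖
          ≤ ∑' m : ℤ, ‖(2*(π:ℂ)) * fourierCoeff (⇑g) (m*N) -
            (if m = 0 then (2*(π:ℂ)) * fourierCoeff (⇑g) 0 else 0)‖ :=
            norm_tsum_le_tsum_norm hsn
        _ ≤ ∑' m : ℤ, (if m = 0 then (0:ℝ) else 2*π*M * Real.exp (-(β*N)*|(m:ℝ)|)) :=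
            Summable.tsum_le_tsum hterm hsn hb.summable
        _ = 2*(2*π*M)*Real.exp (-(β*N))/(1-Real.exp (-(β*N))) := hb.tsum_eq
    have hE1 : 1 < Real.exp (β*N) := by
      rw [show (1:ℝ) = Real.exp 0 by simp]
      exact Real.exp_lt_exp.2 hc
    have hval : 2*(2*π*M)*Real.exp (-(β*N))/(1-Real.exp (-(β*N)))
        = 4*π*M/(Real.exp (β*N) - 1) := by
      rw [Real.exp_neg]
      have hE0 : Real.exp (β*N) ≠ 0 := (Real.exp_pos _).ne'
      have hE2 : Real.exp (β*N) - 1 ≠ 0 := by linarith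
      have hE3 : 1 - (Real.exp (β*N))⁻¹ ≠ 0 := by
        have : (Real.exp (β*N))⁻¹ < 1 := by
          rw [inv_lt_one_iff₀]; right; exact hE1
        linarith
      field_simp
      ring
    rw [hI]
    rw [hval] at h4
    exact h4
  -- let β → α
  have hcont : Filter.Tendsto (fun β : ℝ => 4*π*M/(Real.exp (β*N) - 1))
      (nhdsWithin α (Set.Iio α)) (nhds (4*π*M/(Real.exp (α*N) - 1))) := by
    apply Filter.Tendsto.mono_left _ nhdsWithin_le_nhds
    apply ContinuousAt.tendsto
    apply ContinuousAt.div
    · fun_prop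
    · fun_prop
    · have h5 : 1 < Real.exp (α*N) := by
        rw [show (1:ℝ) = Real.exp 0 by simp]
        exact Real.exp_lt_exp.2 (mul_pos hα hNR)
      intro h
      linarith [h5, h]
  refine ge_of_tendsto hcont ?_
  filter_upwards [Ioo_mem_nhdsLT_of_mem (⟨hα, le_refl α⟩ : α ∈ Set.Ioc 0 α)]
  intro β hβ
  exact main β hβ
end

section
/- Let f be 2π-periodic and Lipschitz continuous, with Fourier coefficients c_k = (1/2π) ∫_0^{2π} f(t) e^{-ikt} dt. Then for every N ≥ 1, the periodic trapezoidal rule error satisfies the exact identity I_N − I = 2π Σ_{j ∈ ℤ, j ≠ 0} c_{jN}, where I = ∫_0^{2π} f(t) dt and I_N = (2π/N) Σ_{j=0}^{N−1} f(2πj/N), the series converging absolutely. -/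
open Real

open MeasureTheory Complex ENNReal NNReal AddCircle

namespace TrapAux

lemma coeff_eq (f : ℝ → ℂ) (h : Function.Periodic f (2*π)) (k : ℤ) :
    haveI : Fact (0 < 2*π) := ⟨by positivity⟩
    fourierCoeff h.lift k = fourierCoefficient f k := by
  haveI : Fact (0 < 2*π) := ⟨by positivity⟩
  rw [fourierCoeff_eq_intervalIntegral _ k 0]
  rw [fourierCoefficient]
  simp only [zero_add]
  rw [real_smul]
  congr 1
  · push_cast; ring
  refine intervalIntegral.integral_congr fun x hx => ?_
  rw [Function.Periodic.lift_coe, fourier_coe_apply, smul_eq_mul, mul_comm]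
  congr 2
  have h2 : ((π:ℂ)) ≠ 0 := by simp [Real.pi_ne_zero]
  push_cast
  field_simp

lemma integrand_periodic (f : ℝ → ℂ) (h : Function.Periodic f (2*π)) (k : ℤ) :
    Function.Periodic (fun u => f u * Complex.exp (-Complex.I * k * u)) (2*π) := by
  intro u
  simp only
  rw [h u]
  congr 1
  have e1 : Complex.exp (((-k : ℤ) : ℂ) * (2 * π * Complex.I)) = 1 :=
    Complex.exp_int_mul_two_pi_mul_I (-k)
  push_cast at e1
  have e2 : -Complex.I * k * (↑(u + 2*π)) = -Complex.I * k * u + (-(k:ℂ)) * (2 * π * Complex.I) := by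
    push_cast; ring
  rw [e2, Complex.exp_add, e1, mul_one]

lemma coeff_translate (f : ℝ → ℂ) (h : Function.Periodic f (2*π))
    (k : ℤ) (s : ℝ) :
    fourierCoefficient (fun t => f (t + s)) k
      = Complex.exp (Complex.I * k * s) * fourierCoefficient f k := by
  unfold fourierCoefficient
  rw [mul_left_comm]
  congr 1
  have key := intervalIntegral.integral_comp_add_right (a := (0:ℝ)) (b := 2*π)
    (fun u => f u * Complex.exp (-Complex.I * k * (u - s))) s
  calc (∫ t in (0:ℝ)..(2*π), f (t + s) * Complex.exp (-Complex.I * k * t))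
      = ∫ t in (0:ℝ)..(2*π),
          (fun u => f u * Complex.exp (-Complex.I * k * (u - s))) (t + s) := by
        refine intervalIntegral.integral_congr fun x hx => ?_
        simp only
        congr 2
        push_cast; ring
    _ = ∫ u in (0+s:ℝ)..(2*π+s), f u * Complex.exp (-Complex.I * k * (u - s)) := key
    _ = ∫ u in (0+s:ℝ)..(2*π+s),
          Complex.exp (Complex.I * k * s) * (f u * Complex.exp (-Complex.I * k * u)) := by
        refine intervalIntegral.integral_congr fun x hx => ?_
        rw [mul_left_comm, ← Complex.exp_add]
        congr 2
        ring
    _ = Complex.exp (Complex.I * k * s) * ∫ u in (0+s:ℝ)..(2*π+s),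
          f u * Complex.exp (-Complex.I * k * u) := intervalIntegral.integral_const_mul _ _
    _ = Complex.exp (Complex.I * k * s) * ∫ t in (0:ℝ)..(2*π),
          f t * Complex.exp (-Complex.I * k * t) := by
        congr 1
        have := (integrand_periodic f h k).intervalIntegral_add_eq s 0
        simpa [zero_add, add_comm] using this

lemma coeff_sub (f : ℝ → ℂ) (h : Function.Periodic f (2*π)) (hc : Continuous f)
    (k : ℤ) (s : ℝ) :
    fourierCoefficient (fun t => f (t + s) - f t) k
      = (Complex.exp (Complex.I * k * s) - 1) * fourierCoefficient f k := by
  have hce : Continuous fun t : ℝ => Complex.exp (-Complex.I * k * t) := by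
    fun_prop
  have i1 : IntervalIntegrable (fun t : ℝ => f (t + s) * Complex.exp (-Complex.I * k * t))
      volume 0 (2*π) := ((hc.comp (continuous_id.add continuous_const)).mul hce).intervalIntegrable _ _
  have i2 : IntervalIntegrable (fun t : ℝ => f t * Complex.exp (-Complex.I * k * t))
      volume 0 (2*π) := (hc.mul hce).intervalIntegrable _ _
  have : fourierCoefficient (fun t => f (t + s) - f t) k
      = fourierCoefficient (fun t => f (t + s)) k - fourierCoefficient f k := by
    unfold fourierCoefficient
    rw [← mul_sub]
    congr 1
    rw [← intervalIntegral.integral_sub i1 i2]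
    refine intervalIntegral.integral_congr fun x hx => ?_
    ring
  rw [this, coeff_translate f h k s]
  ring

lemma parseval_bound (g : ℝ → ℂ) (hg : Function.Periodic g (2*π)) (hgc : Continuous g)
    (C : ℝ) (hb : ∀ t, ‖g t‖ ≤ C) :
    haveI : Fact (0 < 2*π) := ⟨by positivity⟩
    Summable (fun k : ℤ => ‖fourierCoeff hg.lift k‖^2) ∧
      ∑' k : ℤ, ‖fourierCoeff hg.lift k‖^2 ≤ C^2 := by
  haveI : Fact (0 < 2*π) := ⟨by positivity⟩
  have contG : Continuous hg.lift := by rw [continuous_coinduced_dom]; exact hgc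
  set G : C(AddCircle (2*π), ℂ) := ⟨hg.lift, contG⟩ with hG
  set Gq := ContinuousMap.toLp (E := ℂ) 2 (@haarAddCircle (2*π) ⟨by positivity⟩) ℂ G with hGq
  have hcoeff : ∀ k : ℤ, fourierCoeff (Gq : AddCircle (2*π) → ℂ) k = fourierCoeff hg.lift k :=
    fun k => fourierCoeff_toLp G k
  have hsum : Summable (fun k : ℤ => ‖fourierCoeff (Gq : AddCircle (2*π) → ℂ) k‖^2) := by
    have hm := lp.memℓp (fourierBasis.repr Gq)
    rw [memℓp_gen_iff (by norm_num : (0:ℝ) < (2:ℝ≥0∞).toReal)] at hm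
    simp_rw [fourierBasis_repr] at hm
    have h2 : (2:ℝ≥0∞).toReal = ((2:ℕ):ℝ) := by norm_num
    rw [h2] at hm
    simpa [Real.rpow_natCast] using hm
  have hbound : ∀ x : AddCircle (2*π), ‖G x‖ ≤ C := by
    intro x
    induction x using QuotientAddGroup.induction_on with
    | H t => simpa [hG, Function.Periodic.lift_coe] using hb t
  have hint : (∫ t : AddCircle (2*π), ‖(Gq : AddCircle (2*π) → ℂ) t‖^2 ∂haarAddCircle) ≤ C^2 := by
    have hae : (fun t => ‖(Gq : AddCircle (2*π) → ℂ) t‖^2) =ᵐ[haarAddCircle]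
        (fun t => ‖G t‖^2) := by
      filter_upwards [ContinuousMap.coeFn_toLp (p := 2) (μ := haarAddCircle) (𝕜 := ℂ) G]
        with x hx
      rw [hx]
    rw [integral_congr_ae hae]
    calc (∫ t : AddCircle (2*π), ‖G t‖^2 ∂haarAddCircle)
        ≤ ∫ _t : AddCircle (2*π), C^2 ∂haarAddCircle := by
          refine integral_mono_of_nonneg ?_ (integrable_const _) ?_
          · filter_upwards with x; positivity
          · filter_upwards with x
            exact pow_le_pow_left₀ (norm_nonneg _) (hbound x) 2
      _ = C^2 := by simp
  constructor
  · simpa [hcoeff] using hsum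
  · have heq := tsum_sq_fourierCoeff Gq
    calc ∑' k : ℤ, ‖fourierCoeff hg.lift k‖^2
        = ∑' k : ℤ, ‖fourierCoeff (Gq : AddCircle (2*π) → ℂ) k‖^2 :=
          tsum_congr fun k => by rw [hcoeff k]
      _ = ∫ t : AddCircle (2*π), ‖(Gq : AddCircle (2*π) → ℂ) t‖^2 ∂haarAddCircle := heq
      _ ≤ C^2 := hint

lemma cos_le_neg_half {x : ℝ} (h1 : 2*π/3 ≤ |x|) (h2 : |x| ≤ 4*π/3) : Real.cos x ≤ -(1/2) := by
  have hπ := Real.pi_pos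
  rw [← Real.cos_abs x]
  set y := |x| with hy
  have hc : Real.cos (2*π/3) = -(1/2) := by
    have h3 : 2*π/3 = π - π/3 := by ring
    rw [h3, Real.cos_pi_sub, Real.cos_pi_div_three]
  rcases le_or_gt y π with hyπ | hyπ
  · rw [← hc]
    exact Real.cos_le_cos_of_nonneg_of_le_pi (by positivity) hyπ h1
  · have h4 : Real.cos y = Real.cos (2*π - y) := (Real.cos_two_pi_sub y).symm
    rw [h4, ← hc]
    exact Real.cos_le_cos_of_nonneg_of_le_pi (by positivity) (by linarith) (by linarith)

lemma norm_exp_sub_one_sq (θ : ℝ) : ‖Complex.exp (θ * Complex.I) - 1‖^2 = 2 - 2 * Real.cos θ := by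
  have h1 : Complex.exp (θ * Complex.I) - 1
      = Complex.ofReal (Real.cos θ - 1) + Complex.ofReal (Real.sin θ) * Complex.I := by
    rw [Complex.exp_mul_I, ← Complex.ofReal_cos, ← Complex.ofReal_sin]
    push_cast; ring
  rw [h1, Complex.sq_norm, Complex.normSq_add_mul_I]
  have := Real.sin_sq_add_cos_sq θ
  nlinarith

lemma sum_union_le {f : ℤ → ℝ} (hf : ∀ k, 0 ≤ f k) (A C : Finset ℤ) :
    ∑ x ∈ A ∪ C, f x ≤ ∑ x ∈ A, f x + ∑ x ∈ C, f x := by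
  have h := Finset.sum_union_inter (s₁ := A) (s₂ := C) (f := f)
  have h2 : 0 ≤ ∑ x ∈ A ∩ C, f x := Finset.sum_nonneg fun i _ => hf i
  linarith

lemma sum_biUnion_le {f : ℤ → ℝ} (hf : ∀ k, 0 ≤ f k) (s : Finset ℕ) (B : ℕ → Finset ℤ) :
    ∑ x ∈ s.biUnion B, f x ≤ ∑ m ∈ s, ∑ x ∈ B m, f x := by
  induction s using Finset.induction_on with
  | empty => simp
  | insert _ _ hna ih =>
    rename_i a t
    rw [Finset.biUnion_insert, Finset.sum_insert hna]
    exact (sum_union_le hf _ _).trans (by linarith)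

lemma bernstein (f : ℝ → ℂ) (K : NNReal)
    (hper : Function.Periodic f (2*π)) (hlip : LipschitzWith K f) :
    Summable (fun k : ℤ => ‖fourierCoefficient f k‖) := by
  have hπ := Real.pi_pos
  haveI : Fact (0 < 2*π) := ⟨by positivity⟩
  set c := fourierCoefficient f with hc
  set B : ℕ → Finset ℤ := fun m =>
    (Finset.Icc (-(2^(m+1)) : ℤ) (2^(m+1))).filter (fun k => (2:ℤ)^m ≤ |k|) with hB
  set h : ℕ → ℝ := fun m => 2*π/(3*2^m) with hh
  have hhpos : ∀ m, 0 < h m := fun m => by simp only [hh]; positivity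
  -- block L² bound
  have block2 : ∀ m : ℕ, ∑ k ∈ B m, ‖c k‖^2 ≤ ((K : ℝ) * h m)^2 / 3 := by
    intro m
    set g : ℝ → ℂ := fun t => f (t + h m) - f t with hg
    have hgper : Function.Periodic g (2*π) := by
      intro t
      simp only [hg]
      have e : t + 2*π + h m = (t + h m) + 2*π := by ring
      rw [e, hper, hper]
    have hgcont : Continuous g :=
      ((hlip.continuous).comp (continuous_id.add continuous_const)).sub hlip.continuous
    have hgb : ∀ t, ‖g t‖ ≤ (K:ℝ) * h m := by
      intro t
      have hd := hlip.dist_le_mul (t + h m) t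
      rw [dist_eq_norm] at hd
      simpa [Real.dist_eq, abs_of_pos (hhpos m)] using hd
    obtain ⟨hS, hT⟩ := parseval_bound g hgper hgcont ((K:ℝ) * h m) hgb
    have hgc : ∀ k : ℤ, fourierCoeff hgper.lift k
        = (Complex.exp (Complex.I * k * (h m)) - 1) * c k := by
      intro k
      rw [coeff_eq g hgper k]
      exact coeff_sub f hper hlip.continuous k (h m)
    have key : ∀ k ∈ B m, 3 * ‖c k‖^2 ≤ ‖fourierCoeff hgper.lift k‖^2 := by
      intro k hk
      obtain ⟨hk1, hk2⟩ := Finset.mem_filter.mp hk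
      obtain ⟨hk3, hk4⟩ := Finset.mem_Icc.mp hk1
      have habs : |k| ≤ (2:ℤ)^(m+1) := abs_le.mpr ⟨hk3, hk4⟩
      have habsR : ((2:ℝ))^m ≤ |(k:ℝ)| := by
        rw [← Int.cast_abs]; exact_mod_cast hk2
      have habsR2 : |(k:ℝ)| ≤ 2^(m+1) := by
        rw [← Int.cast_abs]; exact_mod_cast habs
      rw [hgc k, norm_mul, mul_pow]
      have hθ : Complex.I * k * (h m) = ((k * h m : ℝ) : ℂ) * Complex.I := by
        push_cast; ring
      rw [hθ, norm_exp_sub_one_sq]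
      have hme : (2:ℝ)^m * h m = 2*π/3 := by
        simp only [hh]
        field_simp
      have hme2 : (2:ℝ)^(m+1) * h m = 4*π/3 := by
        simp only [hh, pow_succ]
        field_simp
        ring
      have hcos : Real.cos ((k:ℝ) * h m) ≤ -(1/2) := by
        apply cos_le_neg_half
        · rw [abs_mul, abs_of_pos (hhpos m)]
          calc 2*π/3 = (2:ℝ)^m * h m := hme.symm
            _ ≤ |(k:ℝ)| * h m := by
                exact mul_le_mul_of_nonneg_right habsR (hhpos m).le
        · rw [abs_mul, abs_of_pos (hhpos m)]
          calc |(k:ℝ)| * h m ≤ (2:ℝ)^(m+1) * h m :=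
                mul_le_mul_of_nonneg_right habsR2 (hhpos m).le
            _ = 4*π/3 := hme2
      nlinarith [sq_nonneg ‖c k‖, norm_nonneg (c k)]
    have step : ∑ k ∈ B m, 3 * ‖c k‖^2 ≤ ((K:ℝ) * h m)^2 := by
      calc ∑ k ∈ B m, 3 * ‖c k‖^2 ≤ ∑ k ∈ B m, ‖fourierCoeff hgper.lift k‖^2 :=
            Finset.sum_le_sum key
        _ ≤ ∑' k : ℤ, ‖fourierCoeff hgper.lift k‖^2 :=
            Summable.sum_le_tsum (B m) (fun k _ => sq_nonneg _) hS
        _ ≤ ((K:ℝ) * h m)^2 := hT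
    rw [← Finset.mul_sum] at step
    linarith
  -- constants
  set D : ℝ := ((K:ℝ) * (2*π/3))^2 / 3 with hD
  have hD0 : 0 ≤ D := by positivity
  set E : ℝ := Real.sqrt (8*D) with hE
  set r : ℝ := Real.sqrt (1/2) with hr
  have hr0 : 0 ≤ r := Real.sqrt_nonneg _
  have hr1 : r < 1 := by
    rw [hr]
    rw [show (1:ℝ) = Real.sqrt 1 by simp]
    exact Real.sqrt_lt_sqrt (by norm_num) (by norm_num)
  have hE0 : 0 ≤ E := Real.sqrt_nonneg _
  -- card bound
  have hcard : ∀ m : ℕ, ((B m).card : ℝ) ≤ 2^(m+3) := by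
    intro m
    have h1 : (B m).card ≤ (Finset.Icc (-(2^(m+1)) : ℤ) (2^(m+1))).card :=
      Finset.card_filter_le _ _
    have h2 : (Finset.Icc (-(2^(m+1)) : ℤ) (2^(m+1))).card = 2^(m+2) + 1 := by
      rw [Int.card_Icc]
      have e : (2^(m+1) : ℤ) + 1 - (-(2^(m+1))) = ((2^(m+2) + 1 : ℕ) : ℤ) := by
        push_cast
        ring
      rw [e, Int.toNat_natCast]
    have h3 : (B m).card ≤ 2^(m+2) + 1 := h2 ▸ h1
    have h4 : (2:ℝ)^(m+2) + 1 ≤ 2^(m+3) := by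
      have h5 : (1:ℝ) ≤ 2^(m+2) := one_le_pow₀ (by norm_num)
      have h6 : (2:ℝ)^(m+3) = 2 * 2^(m+2) := by rw [pow_succ]; ring
      linarith
    calc ((B m).card : ℝ) ≤ ((2^(m+2) + 1 : ℕ) : ℝ) := by exact_mod_cast h3
      _ = 2^(m+2) + 1 := by push_cast; ring
      _ ≤ 2^(m+3) := h4
  -- block ℓ¹ bound
  have block1 : ∀ m : ℕ, ∑ k ∈ B m, ‖c k‖ ≤ E * r^m := by
    intro m
    have cs := Finset.sum_mul_sq_le_sq_mul_sq (B m) (fun _ => (1:ℝ)) (fun k => ‖c k‖)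
    simp only [one_mul, one_pow] at cs
    have hsq : (∑ k ∈ B m, ‖c k‖)^2 ≤ 8*D*(1/2)^m := by
      have hhm : ((K:ℝ) * h m)^2 / 3 = D * (1/2)^m / 2^m := by
        simp only [hh, hD]
        have h2 : ((2:ℝ)^m) ≠ 0 := by positivity
        rw [div_pow, mul_pow, div_pow, mul_pow]
        rw [mul_pow (3:ℝ) (2^m) 2]
        field_simp
        ring
      calc (∑ k ∈ B m, ‖c k‖)^2 ≤ (∑ _k ∈ B m, (1:ℝ)) * ∑ k ∈ B m, ‖c k‖^2 := cs
        _ = ((B m).card : ℝ) * ∑ k ∈ B m, ‖c k‖^2 := by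
            rw [Finset.sum_const, nsmul_eq_mul, mul_one]
        _ ≤ 2^(m+3) * (((K:ℝ) * h m)^2 / 3) := by
            refine mul_le_mul (hcard m) (block2 m) ?_ (by positivity)
            exact Finset.sum_nonneg fun k _ => sq_nonneg _
        _ = 2^(m+3) * (D * (1/2)^m / 2^m) := by rw [hhm]
        _ = 8*D*(1/2)^m := by
            rw [pow_add]
            field_simp
            ring
    have hr2 : r^2 = 1/2 := Real.sq_sqrt (by norm_num)
    have hE2 : E^2 = 8*D := Real.sq_sqrt (by positivity)
    have hEr : (E * r^m)^2 = 8*D*(1/2)^m := by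
      rw [mul_pow, hE2, ← pow_mul, mul_comm m 2, pow_mul, hr2]
    have h0 : 0 ≤ ∑ k ∈ B m, ‖c k‖ := Finset.sum_nonneg fun k _ => norm_nonneg _
    have hEr0 : 0 ≤ E * r^m := by positivity
    calc ∑ k ∈ B m, ‖c k‖ = Real.sqrt ((∑ k ∈ B m, ‖c k‖)^2) := (Real.sqrt_sq h0).symm
      _ ≤ Real.sqrt ((E * r^m)^2) := Real.sqrt_le_sqrt (by rw [hEr]; exact hsq)
      _ = E * r^m := Real.sqrt_sq hEr0
  -- final summability
  refine summable_of_sum_le (c := ‖c 0‖ + E * (1 - r)⁻¹) (fun k => norm_nonneg _) ?_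
  intro u
  set M := (u.sup (fun k => k.natAbs)) + 1 with hM
  have cover : u ⊆ insert 0 ((Finset.range M).biUnion B) := by
    intro k hk
    rcases eq_or_ne k 0 with rfl | hk0
    · exact Finset.mem_insert_self _ _
    refine Finset.mem_insert_of_mem ?_
    rw [Finset.mem_biUnion]
    set n := k.natAbs with hn
    have hn0 : n ≠ 0 := Int.natAbs_ne_zero.mpr hk0
    set m := Nat.log 2 n with hm
    refine ⟨m, ?_, ?_⟩
    · rw [Finset.mem_range, hM]
      have l1 : m ≤ n := Nat.log_le_self 2 n
      have l2 : n ≤ u.sup (fun k => k.natAbs) := Finset.le_sup (f := fun k => k.natAbs) hk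
      omega
    · have h1 : 2^m ≤ n := Nat.pow_log_le_self 2 hn0
      have h2 : n < 2^(m+1) := Nat.lt_pow_succ_log_self (by norm_num) n
      have e1 : (2:ℤ)^m ≤ |k| := by
        rw [Int.abs_eq_natAbs, ← hn]; exact_mod_cast h1
      have e2 : |k| ≤ (2:ℤ)^(m+1) := by
        rw [Int.abs_eq_natAbs, ← hn]; exact_mod_cast h2.le
      simp only [hB, Finset.mem_filter, Finset.mem_Icc]
      exact ⟨⟨(abs_le.mp e2).1, (abs_le.mp e2).2⟩, e1⟩
  calc ∑ k ∈ u, ‖c k‖ ≤ ∑ k ∈ insert 0 ((Finset.range M).biUnion B), ‖c k‖ :=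
        Finset.sum_le_sum_of_subset_of_nonneg cover (fun k _ _ => norm_nonneg _)
    _ ≤ ‖c 0‖ + ∑ k ∈ (Finset.range M).biUnion B, ‖c k‖ := by
        rw [Finset.insert_eq]
        have := sum_union_le (f := fun k => ‖c k‖) (fun k => norm_nonneg _)
          {0} ((Finset.range M).biUnion B)
        simpa using this
    _ ≤ ‖c 0‖ + ∑ m ∈ Finset.range M, ∑ k ∈ B m, ‖c k‖ := by
        have := sum_biUnion_le (f := fun k => ‖c k‖) (fun k => norm_nonneg _)
          (Finset.range M) B
        linarith
    _ ≤ ‖c 0‖ + ∑ m ∈ Finset.range M, E * r^m := by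
        have := Finset.sum_le_sum (fun m (_ : m ∈ Finset.range M) => block1 m)
        linarith
    _ ≤ ‖c 0‖ + E * (1 - r)⁻¹ := by
        rw [← Finset.mul_sum]
        have hgs : ∑ m ∈ Finset.range M, r^m ≤ (1 - r)⁻¹ := by
          have hsummable := summable_geometric_of_lt_one hr0 hr1
          have := Summable.sum_le_tsum (Finset.range M) (fun i _ => pow_nonneg hr0 i) hsummable
          rw [tsum_geometric_of_lt_one hr0 hr1] at this
          exact this
        have := mul_le_mul_of_nonneg_left hgs hE0
        linarith

lemma dft (N : ℕ) (hN : 1 ≤ N) (k : ℤ) :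
    ∑ j ∈ Finset.range N, Complex.exp (2*π*Complex.I*k*j/N)
      = if (N:ℤ) ∣ k then (N:ℂ) else 0 := by
  have hπ := Real.pi_pos
  have hN0 : (N:ℂ) ≠ 0 := by
    simp only [ne_eq, Nat.cast_eq_zero]; omega
  set z : ℂ := Complex.exp (2*π*Complex.I*k/N) with hzdef
  have hz : ∀ j : ℕ, Complex.exp (2*π*Complex.I*k*j/N) = z^j := by
    intro j
    rw [hzdef, ← Complex.exp_nat_mul]
    congr 1
    push_cast
    ring
  simp_rw [hz]
  by_cases hdvd : (N:ℤ) ∣ k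
  · obtain ⟨m, rfl⟩ := hdvd
    have hz1 : z = 1 := by
      rw [hzdef]
      have e : 2*π*Complex.I*((N:ℤ)*m : ℤ)/N = (m:ℂ) * (2*π*Complex.I) := by
        push_cast
        field_simp
      rw [e]
      exact_mod_cast Complex.exp_int_mul_two_pi_mul_I m
    simp [hz1, if_pos (Dvd.intro m rfl)]
  · have hzN : z^N = 1 := by
      rw [hzdef, ← Complex.exp_nat_mul]
      have e : (N:ℂ) * (2*π*Complex.I*k/N) = (k:ℂ)*(2*π*Complex.I) := by
        field_simp
      rw [e]
      exact_mod_cast Complex.exp_int_mul_two_pi_mul_I k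
    have hz1 : z ≠ 1 := by
      intro hz1
      rw [hzdef, Complex.exp_eq_one_iff] at hz1
      obtain ⟨n, hn⟩ := hz1
      apply hdvd
      refine ⟨n, ?_⟩
      have hI : (2*π*Complex.I) ≠ 0 := by
        simp [Complex.I_ne_zero, Real.pi_ne_zero]
      have : (k:ℂ) = ((N:ℤ)*n : ℤ) := by
        push_cast
        field_simp at hn
        have h2 : (2*π*Complex.I) * (k:ℂ) = (2*π*Complex.I) * ((N:ℂ) * n) := by
          linear_combination (2*π*Complex.I) * hn
        exact mul_left_cancel₀ hI h2
      exact_mod_cast this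
    rw [geom_sum_eq hz1, hzN]
    simp [if_neg hdvd]

end TrapAux

/-- For a `2π`-periodic Lipschitz continuous `f`, the `N`-point periodic trapezoidal
rule error satisfies the exact identity `I_N - I = 2π Σ_{j≠0} c_{jN}` for every
`N ≥ 1`, the series converging absolutely. -/
theorem trapezoidal_rule_error_identity
    (f : ℝ → ℂ) (K : NNReal)
    (hper : ∀ t : ℝ, f (t + 2 * π) = f t)
    (hlip : LipschitzWith K f) :
    ∀ N : ℕ, 1 ≤ N →
      Summable (fun j : {j : ℤ // j ≠ 0} =>
        ‖fourierCoefficient f ((j : ℤ) * N)‖) ∧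
      (2 * π / N) * (∑ j ∈ Finset.range N, f (2 * π * j / N)) -
          (∫ t in (0 : ℝ)..(2 * π), f t) =
        2 * π * ∑' j : {j : ℤ // j ≠ 0}, fourierCoefficient f ((j : ℤ) * N) := by
  intro N hN
  have hπ := Real.pi_pos
  haveI : Fact (0 < 2*π) := ⟨by positivity⟩
  have hperf : Function.Periodic f (2*π) := hper
  have hNC : (N:ℂ) ≠ 0 := by simp only [ne_eq, Nat.cast_eq_zero]; omega
  have hNZ : (N:ℤ) ≠ 0 := by omega
  have hπC : (π:ℂ) ≠ 0 := by simp [Real.pi_ne_zero]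
  -- summability of norms
  have hsumN : Summable (fun k : ℤ => ‖fourierCoefficient f k‖) :=
    TrapAux.bernstein f K hperf hlip
  have hinj : Function.Injective (fun j : {j : ℤ // j ≠ 0} => (j : ℤ) * N) := by
    intro a b hab
    exact Subtype.ext (mul_right_cancel₀ hNZ hab)
  have hsub : Summable (fun j : {j : ℤ // j ≠ 0} =>
      ‖fourierCoefficient f ((j : ℤ) * N)‖) := by
    have := hsumN.comp_injective hinj
    exact this
  refine ⟨hsub, ?_⟩
  -- continuous lift
  have contF : Continuous hperf.lift := by
    rw [continuous_coinduced_dom]; exact hlip.continuous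
  set Fc : C(AddCircle (2*π), ℂ) := ⟨hperf.lift, contF⟩ with hFc
  have hcoeffs : ∀ k : ℤ, fourierCoeff (⇑Fc) k = fourierCoefficient f k :=
    fun k => TrapAux.coeff_eq f hperf k
  have hsum2 : Summable (fourierCoeff (⇑Fc)) := by
    refine Summable.of_norm ?_
    simp_rw [hcoeffs]
    exact hsumN
  -- pointwise sums at grid points
  have hj : ∀ j : ℕ, HasSum
      (fun k : ℤ => fourierCoefficient f k * Complex.exp (2*π*Complex.I*k*j/N))
      (f (2*π*j/N)) := by
    intro j
    have hps := has_pointwise_sum_fourier_series_of_summable hsum2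
      ((2*π*j/N : ℝ) : AddCircle (2*π))
    have e1 : Fc (((2*π*j/N : ℝ)) : AddCircle (2*π)) = f (2*π*j/N) :=
      Function.Periodic.lift_coe hperf _
    have e2 : (fun k : ℤ => fourierCoeff (⇑Fc) k • fourier k (((2*π*j/N : ℝ)) : AddCircle (2*π)))
        = fun k : ℤ => fourierCoefficient f k * Complex.exp (2*π*Complex.I*k*j/N) := by
      funext k
      rw [hcoeffs k, smul_eq_mul, fourier_coe_apply]
      congr 2
      push_cast
      field_simp
    rw [e2, e1] at hps
    exact hps
  -- sum over grid
  have Hsum : HasSum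
      (fun k : ℤ => ∑ j ∈ Finset.range N,
        fourierCoefficient f k * Complex.exp (2*π*Complex.I*k*j/N))
      (∑ j ∈ Finset.range N, f (2*π*j/N)) :=
    hasSum_sum fun j _ => hj j
  have Hite : HasSum
      (fun k : ℤ => if (N:ℤ) ∣ k then (N:ℂ) * fourierCoefficient f k else 0)
      (∑ j ∈ Finset.range N, f (2*π*j/N)) := by
    have e3 : (fun k : ℤ => ∑ j ∈ Finset.range N,
        fourierCoefficient f k * Complex.exp (2*π*Complex.I*k*j/N))
        = (fun k : ℤ => if (N:ℤ) ∣ k then (N:ℂ) * fourierCoefficient f k else 0) := by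
      funext k
      rw [← Finset.mul_sum, TrapAux.dft N hN k]
      split_ifs with hd
      · ring
      · ring
    exact e3 ▸ Hsum
  -- reindex over multiples of N
  have hinj2 : Function.Injective (fun m : ℤ => m * N) := fun a b hab =>
    mul_right_cancel₀ hNZ hab
  have hvanish : ∀ k : ℤ, k ∉ Set.range (fun m : ℤ => m * N) →
      (if (N:ℤ) ∣ k then (N:ℂ) * fourierCoefficient f k else 0) = 0 := by
    intro k hk
    rw [if_neg]
    intro hd
    obtain ⟨m, rfl⟩ := hd
    exact hk ⟨m, mul_comm m (N:ℤ)⟩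
  have Hmul : HasSum (fun m : ℤ => (N:ℂ) * fourierCoefficient f (m * N))
      (∑ j ∈ Finset.range N, f (2*π*j/N)) := by
    have := (Function.Injective.hasSum_iff hinj2 hvanish).mpr Hite
    have e4 : ((fun k : ℤ => if (N:ℤ) ∣ k then (N:ℂ) * fourierCoefficient f k else 0)
        ∘ (fun m : ℤ => m * N))
        = fun m : ℤ => (N:ℂ) * fourierCoefficient f (m * N) := by
      funext m
      simp only [Function.comp]
      rw [if_pos (dvd_mul_left (N:ℤ) m)]
    exact e4 ▸ this
  -- multiply by 2π/N
  have H5 : HasSum (fun m : ℤ => 2 * (π:ℂ) * fourierCoefficient f (m * N))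
      ((2 * (π:ℂ) / N) * ∑ j ∈ Finset.range N, f (2*π*j/N)) := by
    have := Hmul.mul_left ((2 * (π:ℂ) / N))
    have e5 : (fun m : ℤ => (2 * (π:ℂ) / N) * ((N:ℂ) * fourierCoefficient f (m * N)))
        = fun m : ℤ => 2 * (π:ℂ) * fourierCoefficient f (m * N) := by
      funext m
      field_simp
    exact e5 ▸ this
  -- remove the zero term
  have Hzero : HasSum (fun m : ℤ => if m = 0 then 2 * (π:ℂ) * fourierCoefficient f 0 else 0)
      (2 * (π:ℂ) * fourierCoefficient f 0) := hasSum_ite_eq 0 _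
  have H6 := H5.sub Hzero
  have hvanish2 : ∀ m : ℤ, m ∉ Set.range (fun j : {j : ℤ // j ≠ 0} => (j : ℤ)) →
      ((fun m : ℤ => 2 * (π:ℂ) * fourierCoefficient f (m * N)) m
        - (if m = 0 then 2 * (π:ℂ) * fourierCoefficient f 0 else 0)) = 0 := by
    intro m hm
    have hm0 : m = 0 := by
      by_contra hm0
      exact hm ⟨⟨m, hm0⟩, rfl⟩
    subst hm0
    simp
  have hinj3 : Function.Injective (fun j : {j : ℤ // j ≠ 0} => (j : ℤ)) :=
    Subtype.coe_injective
  have H7 : HasSum (fun j : {j : ℤ // j ≠ 0} => 2 * (π:ℂ) * fourierCoefficient f ((j:ℤ) * N))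
      ((2 * (π:ℂ) / N) * (∑ j ∈ Finset.range N, f (2*π*j/N))
        - 2 * (π:ℂ) * fourierCoefficient f 0) := by
    have := (Function.Injective.hasSum_iff hinj3 hvanish2).mpr H6
    have e6 : ((fun m : ℤ => 2 * (π:ℂ) * fourierCoefficient f (m * N)
          - (if m = 0 then 2 * (π:ℂ) * fourierCoefficient f 0 else 0))
        ∘ (fun j : {j : ℤ // j ≠ 0} => (j : ℤ)))
        = fun j : {j : ℤ // j ≠ 0} => 2 * (π:ℂ) * fourierCoefficient f ((j:ℤ) * N) := by
      funext j
      simp only [Function.comp]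
      rw [if_neg j.2]
      ring
    exact e6 ▸ this
  -- c₀ equals the integral
  have hc0 : 2 * (π:ℂ) * fourierCoefficient f 0 = ∫ t in (0:ℝ)..(2*π), f t := by
    unfold fourierCoefficient
    simp only [Int.cast_zero, mul_zero, zero_mul, Complex.exp_zero, mul_one]
    rw [← mul_assoc]
    rw [mul_one_div, div_self (by simpa using hπC), one_mul]
  have := H7.tsum_eq
  rw [_root_.tsum_mul_left] at this
  rw [← hc0]
  exact this.symm
end

section
/- Let N = 2n+1 be odd, t_k = 2πk/N for 0 ≤ k ≤ N−1, and let p be the unique trigonometric polynomial of degree at most n interpolating values f_0, …, f_{N−1} at these points. Then for every t not equal to any t_k, p is given by the barycentric formula p(t) = [Σ_{k=0}^{N−1} (−1)^k f_k csc((t − t_k)/2)] / [Σ_{k=0}^{N−1} (−1)^k csc((t − t_k)/2)]; in particular the denominator is nonzero at such t. -/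
open Real

/-- Barycentric formula for trigonometric interpolation in an odd number `N = 2n+1`
of equispaced points `t_k = 2πk/N`: if `p` is the trigonometric polynomial of degree
at most `n` with `p(t_k) = f_k` for `0 ≤ k ≤ N-1`, then for every `t ∈ [0, 2π)`
different from all the `t_k`,
`p(t) = [Σ_k (-1)^k f_k csc((t-t_k)/2)] / [Σ_k (-1)^k csc((t-t_k)/2)]`,
the denominator being nonzero. -/
theorem trig_barycentric_formula
    (n : ℕ) (fval : ℕ → ℂ) (p : ℝ → ℂ)
    (hp : ∃ γ : ℤ → ℂ, ∀ t : ℝ,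
      p t = ∑ k ∈ Finset.Icc (-(n : ℤ)) n, γ k * Complex.exp (Complex.I * k * t))
    (hinterp : ∀ j ∈ Finset.range (2 * n + 1),
      p (2 * π * j / (2 * n + 1)) = fval j)
    (t : ℝ) (ht : t ∈ Set.Ico (0 : ℝ) (2 * π))
    (htk : ∀ j ∈ Finset.range (2 * n + 1), t ≠ 2 * π * j / (2 * n + 1)) :
    (∑ k ∈ Finset.range (2 * n + 1),
        ((-1 : ℂ) ^ k * ((Real.sin ((t - 2 * π * k / (2 * n + 1)) / 2))⁻¹ : ℝ))) ≠ 0 ∧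
    p t = (∑ k ∈ Finset.range (2 * n + 1),
        (-1 : ℂ) ^ k * fval k * ((Real.sin ((t - 2 * π * k / (2 * n + 1)) / 2))⁻¹ : ℝ)) /
      (∑ k ∈ Finset.range (2 * n + 1),
        (-1 : ℂ) ^ k * ((Real.sin ((t - 2 * π * k / (2 * n + 1)) / 2))⁻¹ : ℝ)) := by
  obtain ⟨γ, hγ⟩ := hp
  obtain ⟨ht0, ht2⟩ := ht
  obtain ⟨N, hNdef⟩ : ∃ N : ℕ, N = 2 * n + 1 := ⟨_, rfl⟩
  have hN0 : N ≠ 0 := by omega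
  have hNR : (0:ℝ) < (N:ℝ) := by positivity
  have hNcR : (2*(n:ℝ)+1) = ((N:ℝ)) := by rw [hNdef]; push_cast; ring
  have hNC0 : (N:ℂ) ≠ 0 := by exact_mod_cast hN0
  simp only [← hNdef, hNcR] at htk hinterp ⊢
  set z : ℂ := Complex.exp (Complex.I * t) with hzdef
  set ζ : ℂ := Complex.exp (2 * (π:ℂ) * Complex.I / N) with hζdef
  have hprim : IsPrimitiveRoot ζ N := Complex.isPrimitiveRoot_exp N hN0
  have hζN : ζ ^ N = 1 := hprim.pow_eq_one
  have hζ0 : ζ ≠ 0 := Complex.exp_ne_zero _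
  have hz0 : z ≠ 0 := Complex.exp_ne_zero _
  have hpi := Real.pi_pos
  -- z^N ≠ 1
  have hzN : z ^ N ≠ 1 := by
    intro h
    rw [hzdef, ← Complex.exp_nat_mul, Complex.exp_eq_one_iff] at h
    obtain ⟨m, hm⟩ := h
    have hre : (N : ℝ) * t = m * (2 * π) := by
      have := congrArg Complex.im hm
      simpa using this
    have hm0 : 0 ≤ m := by
      by_contra hc
      push_neg at hc
      have hcle : m ≤ -1 := by omega
      have : (m:ℝ) ≤ -1 := by exact_mod_cast hcle
      nlinarith
    have hmN : m < (N:ℤ) := by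
      by_contra hc
      push_neg at hc
      have : ((N:ℝ)) ≤ (m:ℝ) := by exact_mod_cast hc
      nlinarith
    refine htk m.toNat (Finset.mem_range.mpr (by omega)) ?_
    have hmt : ((m.toNat : ℝ)) = (m:ℝ) := by
      exact_mod_cast Int.toNat_of_nonneg hm0
    rw [hmt]
    rw [eq_div_iff (ne_of_gt hNR)]
    linarith [hre]
  have hzNs : z ^ N - 1 ≠ 0 := sub_ne_zero.mpr hzN
  have hzk : ∀ k : ℕ, z - ζ ^ k ≠ 0 := by
    intro k h
    apply hzN
    rw [sub_eq_zero] at h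
    rw [h, ← pow_mul, mul_comm, pow_mul, hζN, one_pow]
  -- geometric sum over roots of unity
  have hgeom : ∀ b : ℕ, ∑ k ∈ Finset.range N, (ζ^b)^k = if N ∣ b then (N:ℂ) else 0 := by
    intro b
    by_cases h : N ∣ b
    · rw [if_pos h, (hprim.pow_eq_one_iff_dvd b).mpr h]
      simp
    · rw [if_neg h]
      have hne : ζ^b ≠ 1 := fun hc => h ((hprim.pow_eq_one_iff_dvd b).mp hc)
      rw [geom_sum_eq hne]
      have hbN : (ζ^b)^N = 1 := by
        rw [← pow_mul, mul_comm, pow_mul, hζN, one_pow]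
      rw [hbN, sub_self, zero_div]
  -- key sum
  have hA : ∀ a : ℕ, 1 ≤ a → a ≤ N →
      ∑ k ∈ Finset.range N, (ζ^k)^a / (z - ζ^k) = N * z^(a-1) / (z^N - 1) := by
    intro a ha1 haN
    have hstep : ∀ k ∈ Finset.range N, (ζ^k)^a / (z - ζ^k)
        = (∑ j ∈ Finset.range N, z^j * (ζ^(a + (N-1-j)))^k) / (z^N - 1) := by
      intro k _
      have hgm : (∑ j ∈ Finset.range N, z^j * (ζ^k)^(N-1-j)) * (z - ζ^k) = z^N - 1 := by
        rw [geom_sum₂_mul, ← pow_mul, mul_comm k N, pow_mul, hζN, one_pow]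
      rw [div_eq_div_iff (hzk k) hzNs]
      calc (ζ^k)^a * (z^N - 1)
          = (ζ^k)^a * ((∑ j ∈ Finset.range N, z^j * (ζ^k)^(N-1-j)) * (z - ζ^k)) := by rw [hgm]
        _ = (∑ j ∈ Finset.range N, z^j * ((ζ^k)^a * (ζ^k)^(N-1-j))) * (z - ζ^k) := by
            rw [← mul_assoc, Finset.mul_sum]
            congr 1
            exact Finset.sum_congr rfl fun j _ => by ring
        _ = (∑ j ∈ Finset.range N, z^j * (ζ^(a + (N-1-j)))^k) * (z - ζ^k) := by
            congr 1
            refine Finset.sum_congr rfl fun j _ => ?_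
            congr 1
            rw [← pow_add, ← pow_mul, ← pow_mul, mul_comm k (a + (N-1-j))]
    calc ∑ k ∈ Finset.range N, (ζ^k)^a/(z - ζ^k)
        = ∑ k ∈ Finset.range N,
            (∑ j ∈ Finset.range N, z^j * (ζ^(a+(N-1-j)))^k)/(z^N-1) :=
          Finset.sum_congr rfl hstep
      _ = (∑ j ∈ Finset.range N, z^j * ∑ k ∈ Finset.range N, (ζ^(a+(N-1-j)))^k)/(z^N-1) := by
          rw [← Finset.sum_div, Finset.sum_comm]
          congr 1
          exact Finset.sum_congr rfl fun j _ => (Finset.mul_sum _ _ _).symm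
      _ = (∑ j ∈ Finset.range N, if j = a-1 then z^j * (N:ℂ) else 0)/(z^N-1) := by
          congr 1
          refine Finset.sum_congr rfl fun j hj => ?_
          have hjN := Finset.mem_range.mp hj
          rw [hgeom]
          by_cases hja : j = a - 1
          · rw [if_pos ⟨1, by omega⟩, if_pos hja]
          · have hnd : ¬ N ∣ a + (N-1-j) := by
              intro hdvd
              have hb := Nat.eq_of_dvd_of_lt_two_mul (by omega) hdvd (by omega)
              omega
            rw [if_neg hnd, if_neg hja, mul_zero]
      _ = N * z^(a-1)/(z^N-1) := by
          rw [Finset.sum_ite_eq' (Finset.range N) (a-1) fun j => z^j * (N:ℂ)]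
          rw [if_pos (Finset.mem_range.mpr (by omega))]
          ring
  -- nonvanishing of the sines
  have hsin : ∀ k ∈ Finset.range N, Real.sin (t/2 - π*k/N) ≠ 0 := by
    intro k hk h
    rw [Real.sin_eq_zero_iff] at h
    obtain ⟨m, hm⟩ := h
    have hkN : (k:ℝ) < (N:ℝ) := by exact_mod_cast Finset.mem_range.mp hk
    have hkpos : (0:ℝ) ≤ (k:ℝ) := by positivity
    have hb1 : 0 ≤ π*(k:ℝ)/N := by positivity
    have hb2 : π*(k:ℝ)/N < π := by
      rw [div_lt_iff₀ hNR]
      nlinarith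
    have hm0 : m = 0 := by
      have h1 : (m:ℝ) < 1 := by
        have hlt : (m:ℝ)*π < 1*π := by rw [one_mul]; linarith [hm]
        exact lt_of_mul_lt_mul_right hlt (le_of_lt hpi)
      have h2 : (-1:ℝ) < m := by
        have hlt : (-1:ℝ)*π < (m:ℝ)*π := by nlinarith [hm]
        exact lt_of_mul_lt_mul_right hlt (le_of_lt hpi)
      have hb : (-1:ℤ) < m ∧ m < 1 := ⟨by exact_mod_cast h2, by exact_mod_cast h1⟩
      omega
    rw [hm0] at hm
    push_cast at hm
    refine htk k hk ?_
    have hm' : t/2 = π*(k:ℝ)/N := by linarith [hm]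
    rw [show (2*π*(k:ℝ)/(N:ℝ)) = 2*(π*(k:ℝ)/N) from by ring, ← hm']
    ring
  -- per-term identity
  have hterm : ∀ k ∈ Finset.range N,
      ((-1:ℂ)^k * ((Real.sin ((t - 2*π*k/((N:ℝ)))/2))⁻¹ : ℝ))
        = 2*Complex.I*Complex.exp (Complex.I*((t:ℂ)/2)) * (ζ^k)^(n+1) / (z - ζ^k) := by
    intro k hk
    have hu0 : Complex.exp (Complex.I*((t:ℂ)/2)) ≠ 0 := Complex.exp_ne_zero _
    set A : ℝ := π*k/N with hAdef
    have hv0 : Complex.exp ((A:ℂ)*Complex.I) ≠ 0 := Complex.exp_ne_zero _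
    have harg : (t - 2*π*k/((N:ℝ)))/2 = t/2 - A := by rw [hAdef]; ring
    have e1 : ζ^k = (Complex.exp ((A:ℂ)*Complex.I))^2 := by
      rw [hζdef, ← Complex.exp_nat_mul, ← Complex.exp_nat_mul]
      congr 1
      rw [hAdef]
      push_cast
      field_simp
    have e2 : ((-1:ℂ))^k = (Complex.exp ((A:ℂ)*Complex.I))^N := by
      rw [← Complex.exp_pi_mul_I, ← Complex.exp_nat_mul, ← Complex.exp_nat_mul]
      congr 1
      rw [hAdef]
      push_cast
      field_simp
    have e3 : z = (Complex.exp (Complex.I*((t:ℂ)/2)))^2 := by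
      rw [hzdef, ← Complex.exp_nat_mul]
      congr 1
      push_cast
      ring
    have h1 : Complex.exp (-((t/2 - A : ℝ):ℂ)*Complex.I)
        = (Complex.exp (Complex.I*((t:ℂ)/2)))⁻¹ * Complex.exp ((A:ℂ)*Complex.I) := by
      rw [← Complex.exp_neg, ← Complex.exp_add]
      congr 1
      push_cast
      ring
    have h2 : Complex.exp (((t/2 - A : ℝ):ℂ)*Complex.I)
        = Complex.exp (Complex.I*((t:ℂ)/2)) * (Complex.exp ((A:ℂ)*Complex.I))⁻¹ := by
      rw [← Complex.exp_neg, ← Complex.exp_add]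
      congr 1
      push_cast
      ring
    have e4 : Complex.sin ((t/2 - A : ℝ):ℂ)
        = ((Complex.exp (Complex.I*((t:ℂ)/2)))⁻¹ * Complex.exp ((A:ℂ)*Complex.I)
          - Complex.exp (Complex.I*((t:ℂ)/2)) * (Complex.exp ((A:ℂ)*Complex.I))⁻¹)
            *Complex.I/2 := by
      rw [show Complex.sin ((t/2 - A : ℝ):ℂ)
          = (Complex.exp (-((t/2 - A : ℝ):ℂ)*Complex.I)
            - Complex.exp (((t/2 - A : ℝ):ℂ)*Complex.I))*Complex.I/2 from rfl]
      rw [h1, h2]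
    have hs0 : Complex.sin ((t/2 - A : ℝ):ℂ) ≠ 0 := by
      rw [← Complex.ofReal_sin]
      exact_mod_cast hsin k hk
    rw [harg, Complex.ofReal_inv, Complex.ofReal_sin, ← div_eq_mul_inv,
      div_eq_div_iff hs0 (hzk k), e1, e2, e3, e4]
    rw [show (2*Complex.I*Complex.exp (Complex.I*((t:ℂ)/2))
          *(((Complex.exp ((A:ℂ)*Complex.I))^2)^(n+1))
          * (((Complex.exp (Complex.I*((t:ℂ)/2)))⁻¹ * Complex.exp ((A:ℂ)*Complex.I)
          - Complex.exp (Complex.I*((t:ℂ)/2)) * (Complex.exp ((A:ℂ)*Complex.I))⁻¹)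
            *Complex.I/2))
        = (Complex.I*Complex.I) * (Complex.exp (Complex.I*((t:ℂ)/2))
            *((Complex.exp ((A:ℂ)*Complex.I))^2)^(n+1)
            *((Complex.exp (Complex.I*((t:ℂ)/2)))⁻¹ * Complex.exp ((A:ℂ)*Complex.I)
          - Complex.exp (Complex.I*((t:ℂ)/2)) * (Complex.exp ((A:ℂ)*Complex.I))⁻¹)) from by
          ring, Complex.I_mul_I]
    rw [hNdef]
    field_simp
    ring
  -- denominator value
  set D : ℂ := 2*Complex.I*Complex.exp (Complex.I*((t:ℂ)/2)) * N * z^n / (z^N - 1) with hD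
  have hDen : (∑ k ∈ Finset.range N,
      ((-1:ℂ)^k * ((Real.sin ((t - 2*π*k/((N:ℝ)))/2))⁻¹ : ℝ))) = D := by
    rw [Finset.sum_congr rfl hterm]
    simp only [mul_div_assoc]
    rw [← Finset.mul_sum, hA (n+1) (by omega) (by omega)]
    rw [hD]
    have hn1 : n + 1 - 1 = n := by omega
    rw [hn1]
    ring
  have hD0 : D ≠ 0 := by
    rw [hD]
    apply div_ne_zero _ hzNs
    exact mul_ne_zero (mul_ne_zero (mul_ne_zero
      (mul_ne_zero two_ne_zero Complex.I_ne_zero) (Complex.exp_ne_zero _)) hNC0)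
      (pow_ne_zero _ hz0)
  -- numerator value
  have hfv : ∀ k ∈ Finset.range N,
      (fval k) = ∑ m ∈ Finset.Icc (-(n:ℤ)) n, γ m * (ζ^k)^(m:ℤ) := by
    intro k hk
    rw [← hinterp k hk, hγ]
    refine Finset.sum_congr rfl fun m _ => ?_
    congr 1
    rw [hζdef, ← Complex.exp_nat_mul, ← Complex.exp_int_mul]
    congr 1
    push_cast
    field_simp
  have hzm : ∀ m : ℤ, z ^ m = Complex.exp (Complex.I * m * t) := by
    intro m
    rw [hzdef, ← Complex.exp_int_mul]
    congr 1
    push_cast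
    ring
  have hNum : (∑ k ∈ Finset.range N,
      (-1:ℂ)^k * fval k * ((Real.sin ((t - 2*π*k/((N:ℝ)))/2))⁻¹ : ℝ)) = p t * D := by
    calc (∑ k ∈ Finset.range N,
        (-1:ℂ)^k * fval k * ((Real.sin ((t - 2*π*k/((N:ℝ)))/2))⁻¹ : ℝ))
        = ∑ k ∈ Finset.range N, (∑ m ∈ Finset.Icc (-(n:ℤ)) n, γ m * (ζ^k)^(m:ℤ))
            * (2*Complex.I*Complex.exp (Complex.I*((t:ℂ)/2)) * (ζ^k)^(n+1) / (z - ζ^k)) := by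
          refine Finset.sum_congr rfl fun k hk => ?_
          rw [show ((-1:ℂ)^k * fval k * ((Real.sin ((t - 2*π*k/((N:ℝ)))/2))⁻¹ : ℝ))
              = fval k * ((-1:ℂ)^k * ((Real.sin ((t - 2*π*k/((N:ℝ)))/2))⁻¹ : ℝ)) from by ring]
          rw [hterm k hk, hfv k hk]
      _ = ∑ m ∈ Finset.Icc (-(n:ℤ)) n, γ m * ∑ k ∈ Finset.range N,
            (ζ^k)^(m:ℤ) * (2*Complex.I*Complex.exp (Complex.I*((t:ℂ)/2)) * (ζ^k)^(n+1) / (z - ζ^k)) := by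
          rw [Finset.sum_congr rfl
            (fun k _ => Finset.sum_mul (Finset.Icc (-(n:ℤ)) n) (fun m => γ m * (ζ^k)^(m:ℤ))
              (2*Complex.I*Complex.exp (Complex.I*((t:ℂ)/2)) * (ζ^k)^(n+1) / (z - ζ^k)))]
          rw [Finset.sum_comm]
          refine Finset.sum_congr rfl fun m _ => ?_
          rw [Finset.mul_sum]
          exact Finset.sum_congr rfl fun k _ => by ring
      _ = ∑ m ∈ Finset.Icc (-(n:ℤ)) n, γ m * Complex.exp (Complex.I*(m:ℂ)*(t:ℂ)) * D := by
          refine Finset.sum_congr rfl fun m hm => ?_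
          obtain ⟨hm1, hm2⟩ := Finset.mem_Icc.mp hm
          have hk0 : ∀ k:ℕ, (ζ^k : ℂ) ≠ 0 := fun k => pow_ne_zero _ hζ0
          set a : ℕ := (m + (n+1)).toNat with ha
          have ha1 : 1 ≤ a := by omega
          have haN : a ≤ N := by omega
          have hpw : ∀ k:ℕ, (ζ^k)^(m:ℤ) * ((ζ^k)^(n+1):ℂ) = (ζ^k)^a := by
            intro k
            rw [← zpow_natCast (ζ^k) (n+1), ← zpow_add₀ (hk0 k), ← zpow_natCast (ζ^k) a]
            congr 1
            omega
          have hsum : ∑ k ∈ Finset.range N,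
              (ζ^k)^(m:ℤ) * (2*Complex.I*Complex.exp (Complex.I*((t:ℂ)/2)) * (ζ^k)^(n+1) / (z - ζ^k))
              = 2*Complex.I*Complex.exp (Complex.I*((t:ℂ)/2))
                  * ∑ k ∈ Finset.range N, (ζ^k)^a/(z-ζ^k) := by
            rw [Finset.mul_sum]
            refine Finset.sum_congr rfl fun k _ => ?_
            rw [← hpw k]; ring
          have hz' : (z:ℂ)^(a-1) = z^n * z^(m:ℤ) := by
            rw [← zpow_natCast z (a-1), ← zpow_natCast z n, ← zpow_add₀ hz0]
            congr 1
            omega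
          rw [hsum, hA a ha1 haN, hz', hzm m, hD]
          field_simp
      _ = p t * D := by
          rw [← Finset.sum_mul, ← hγ t]
  refine ⟨by rw [hDen]; exact hD0, ?_⟩
  rw [hNum, hDen, mul_div_assoc, div_self hD0, mul_one]
end
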